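/- arXiv:1603.03191 — 7 statements merged into one kernel-verified Lean document; each statement's English description precedes it below -/
import Mathlib

section
/- Let R(ℤ) be the set of functions f : [0,∞) → ℝ that are continuous, convex, piecewise affine with all slopes in ℤ and with only finitely many discontinuities of the derivative, viewed as a semiring with addition (f,g) ↦ pointwise max and multiplication (f,g) ↦ pointwise sum. Then for every map φ : R(ℤ) → ℝ ∪ {−∞} satisfying φ(max(f,g)) = max(φ(f), φ(g)), φ(f + g) = φ(f) + φ(g), and φ(c) = c for every constant function c ∈ ℝ, there exists a unique λ ∈ [0,∞) such that φ(f) = f(λ) for all f ∈ R(ℤ). Consequently λ ↦ (f ↦ f(λ)) is a bijection from [0,∞) onto the set of such maps φ. -/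
/-- Membership in the semiring `R(ℤ)`: functions on `[0,∞)` (encoded as functions on `ℝ`
extended constantly to the left of `0`) that are continuous, convex, and piecewise affine with
slopes in `ℤ` with only finitely many discontinuities of the derivative — i.e. locally affine
with integral slope away from a finite set. -/
def RZmem (f : ℝ → ℝ) : Prop :=
  ContinuousOn f (Set.Ici 0) ∧ ConvexOn ℝ (Set.Ici 0) f ∧
  (∃ F : Finset ℝ, ∀ x ∈ Set.Ici (0 : ℝ), x ∉ F →
    ∃ (m : ℤ) (c δ : ℝ), 0 < δ ∧
      ∀ y ∈ Set.Ici (0 : ℝ) ∩ Set.Ioo (x - δ) (x + δ), f y = (m : ℝ) * y + c) ∧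
  (∀ x : ℝ, x ≤ 0 → f x = f 0)


open Set

noncomputable section

/-- extended line -/
def lineA (p : ℤ × ℝ) : ℝ → ℝ := fun x => (p.1 : ℝ) * max x 0 + p.2

/-- pure line -/
def lineP (p : ℤ × ℝ) : ℝ → ℝ := fun x => (p.1 : ℝ) * x + p.2

def maxA : (ℤ × ℝ) → List (ℤ × ℝ) → ℝ → ℝ
  | p, [], x => lineA p x
  | p, q :: r, x => max (lineA p x) (maxA q r x)

def maxP : (ℤ × ℝ) → List (ℤ × ℝ) → ℝ → ℝ
  | p, [], x => lineP p x
  | p, q :: r, x => max (lineP p x) (maxP q r x)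

lemma lineA_eq_lineP {x : ℝ} (hx : 0 ≤ x) (p : ℤ × ℝ) : lineA p x = lineP p x := by
  simp [lineA, lineP, max_eq_left hx]

lemma maxA_eq_maxP {x : ℝ} (hx : 0 ≤ x) : ∀ p L, maxA p L x = maxP p L x
  | p, [] => lineA_eq_lineP hx p
  | p, q :: r => by
      rw [maxA, maxP, lineA_eq_lineP hx, maxA_eq_maxP hx q r]

lemma le_maxA {x : ℝ} : ∀ p L, ∀ q ∈ p :: L, lineA q x ≤ maxA p L x
  | p, [], q, hq => by
      simp at hq; subst hq; exact le_rfl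
  | p, r :: L', q, hq => by
      rcases List.mem_cons.1 hq with h | h
      · subst h; exact le_max_left _ _
      · exact le_trans (le_maxA r L' q h) (le_max_right _ _)

lemma maxA_le {x b : ℝ} : ∀ p L, (∀ q ∈ p :: L, lineA q x ≤ b) → maxA p L x ≤ b
  | p, [], h => h p (by simp)
  | p, r :: L', h => by
      rw [maxA]
      exact max_le (h p (by simp)) (maxA_le r L' fun q hq => h q (List.mem_cons_of_mem _ hq))

lemma maxA_attain {x : ℝ} : ∀ p L, ∃ q ∈ p :: L, maxA p L x = lineA q x
  | p, [] => ⟨p, by simp, rfl⟩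
  | p, r :: L' => by
      rcases maxA_attain (x := x) r L' with ⟨q, hq, hq2⟩
      rcases le_total (lineA p x) (maxA r L' x) with h | h
      · exact ⟨q, List.mem_cons_of_mem _ hq, by rw [maxA, max_eq_right h, hq2]⟩
      · exact ⟨p, by simp, by rw [maxA, max_eq_left h]⟩

lemma lineA_of_nonpos {x : ℝ} (hx : x ≤ 0) (p : ℤ × ℝ) : lineA p x = p.2 := by
  simp [lineA, max_eq_right hx]

lemma maxA_of_nonpos {x : ℝ} (hx : x ≤ 0) : ∀ p L, maxA p L x = maxA p L 0
  | p, [] => by simp [maxA, lineA_of_nonpos hx, lineA_of_nonpos le_rfl]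
  | p, q :: r => by
      rw [maxA, maxA, lineA_of_nonpos hx, lineA_of_nonpos le_rfl,
        maxA_of_nonpos hx q r]

lemma continuous_lineA (p : ℤ × ℝ) : Continuous (lineA p) := by
  unfold lineA; fun_prop

lemma continuous_maxA : ∀ p L, Continuous (maxA p L)
  | p, [] => continuous_lineA p
  | p, q :: r => by
      have h1 := continuous_lineA p
      have h2 := continuous_maxA q r
      have : maxA p (q :: r) = fun x => max (lineA p x) (maxA q r x) := rfl
      rw [this]; exact h1.max h2

lemma convexOn_lineP (m c : ℝ) : ConvexOn ℝ (Ici 0) (fun x => m * x + c) := by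
  constructor
  · exact convex_Ici 0
  · intro x _ y _ a b ha hb hab
    simp only [smul_eq_mul]
    have : m * (a * x + b * y) + c = a * (m * x + c) + b * (m * y + c) := by
      linear_combination (-c) * hab
    linarith [this]

lemma concaveOn_lineP (m c : ℝ) : ConcaveOn ℝ (Ici 0) (fun x => m * x + c) := by
  constructor
  · exact convex_Ici 0
  · intro x _ y _ a b ha hb hab
    simp only [smul_eq_mul]
    have : m * (a * x + b * y) + c = a * (m * x + c) + b * (m * y + c) := by
      linear_combination (-c) * hab
    linarith [this]

lemma convexOn_congr {f g : ℝ → ℝ} {s : Set ℝ} (hs : Convex ℝ s)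
    (h : ∀ x ∈ s, f x = g x) (hf : ConvexOn ℝ s f) : ConvexOn ℝ s g := by
  constructor
  · exact hs
  · intro x hx y hy a b ha hb hab
    rw [← h _ (hs hx hy ha hb hab), ← h _ hx, ← h _ hy]
    exact hf.2 hx hy ha hb hab

lemma concaveOn_congr {f g : ℝ → ℝ} {s : Set ℝ} (hs : Convex ℝ s)
    (h : ∀ x ∈ s, f x = g x) (hf : ConcaveOn ℝ s f) : ConcaveOn ℝ s g := by
  constructor
  · exact hs
  · intro x hx y hy a b ha hb hab
    rw [← h _ (hs hx hy ha hb hab), ← h _ hx, ← h _ hy]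
    exact hf.2 hx hy ha hb hab

lemma convexOn_lineA (p : ℤ × ℝ) : ConvexOn ℝ (Ici 0) (lineA p) := by
  refine convexOn_congr (convex_Ici 0) (fun x hx => ?_) (convexOn_lineP p.1 p.2)
  exact (lineA_eq_lineP hx p).symm

lemma convexOn_maxA : ∀ p L, ConvexOn ℝ (Ici 0) (maxA p L)
  | p, [] => convexOn_lineA p
  | p, q :: r => by
      have h := (convexOn_lineA p).sup (convexOn_maxA q r)
      have e : maxA p (q :: r) = lineA p ⊔ maxA q r := rfl
      rw [e]; exact h

/-- two points determine a line -/
lemma line_eq_of_open {m m' c c' : ℝ} {U : Set ℝ} (hU : IsOpen U) (hne : U.Nonempty)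
    (h : ∀ z ∈ U, m * z + c = m' * z + c') : m = m' ∧ c = c' := by
  obtain ⟨z, hz⟩ := hne
  obtain ⟨ε, hε, hball⟩ := Metric.isOpen_iff.1 hU z hz
  have hz1 := h z hz
  have hz2 := h (z + ε / 2) (hball (by
    simp only [Metric.mem_ball, Real.dist_eq]
    rw [abs_of_nonneg (by linarith : (0:ℝ) ≤ z + ε/2 - z)]
    linarith))
  have h3 : (m - m') * (ε/2) = 0 := by linear_combination hz2 - hz1
  have hε2 : (ε/2) ≠ 0 := by positivity
  have hm : m = m' := by
    rcases mul_eq_zero.1 h3 with h4 | h4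
    · linarith
    · exact absurd h4 hε2
  exact ⟨hm, by linear_combination hz1 - z * hm⟩

/-- locally affine on an open preconnected set implies affine -/
lemma locAffine {g : ℝ → ℝ} {s : Set ℝ} (hs : IsOpen s) (hconn : IsPreconnected s)
    (hne : s.Nonempty)
    (h : ∀ x ∈ s, ∃ (m : ℤ) (c : ℝ) (U : Set ℝ), IsOpen U ∧ x ∈ U ∧
      ∀ y ∈ U, g y = (m : ℝ) * y + c) :
    ∃ (m : ℤ) (c : ℝ), ∀ y ∈ s, g y = (m : ℝ) * y + c := by
  obtain ⟨x0, hx0⟩ := hne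
  obtain ⟨m, c, U0, hU0, hx0U, hg0⟩ := h x0 hx0
  refine ⟨m, c, ?_⟩
  set E : Set ℝ := interior {z | g z = (m : ℝ) * z + c} with hE
  have hsub : s ⊆ E := by
    apply hconn.subset_of_closure_inter_subset isOpen_interior
    · exact ⟨x0, hx0, (hU0.subset_interior_iff.2 (fun y hy => hg0 y hy)) hx0U⟩
    · rintro y ⟨hyc, hys⟩
      obtain ⟨m', c', V, hV, hyV, hg'⟩ := h y hys
      have hVE : (V ∩ E).Nonempty := by
        rcases (mem_closure_iff.1 hyc) V hV hyV with ⟨w, hwV, hwE⟩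
        exact ⟨w, hwV, hwE⟩
      obtain ⟨w, hwV, hwE⟩ := hVE
      obtain ⟨W, hWsub, hW, hwW⟩ := mem_interior.1 hwE
      have hVW : (V ∩ W).Nonempty := ⟨w, hwV, hwW⟩
      have heq : ∀ z ∈ V ∩ W, (m' : ℝ) * z + c' = (m : ℝ) * z + c := by
        rintro z ⟨hzV, hzW⟩
        rw [← hg' z hzV]
        exact hWsub hzW
      obtain ⟨hm, hc⟩ := line_eq_of_open (hV.inter hW) hVW heq
      have : V ⊆ {z | g z = (m : ℝ) * z + c} := by
        intro z hz
        rw [mem_setOf_eq, hg' z hz, hm, hc]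
      exact mem_interior.2 ⟨V, this, hV, hyV⟩
  intro y hy
  have h2 : y ∈ {z | g z = (m : ℝ) * z + c} := interior_subset (hsub hy)
  exact h2


lemma eq_at_left {f : ℝ → ℝ} (hf : ContinuousOn f (Ici 0)) {p q m c : ℝ}
    (hp : 0 ≤ p) (hpq : p < q) (h : ∀ y ∈ Ioo p q, f y = m * y + c) :
    f p = m * p + c := by
  have hsub : Ioo p q ⊆ Ici 0 := fun y hy => le_trans hp (le_of_lt hy.1)
  have h1 : Filter.Tendsto f (nhdsWithin p (Ioo p q)) (nhds (f p)) :=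
    ((hf p hp).mono hsub)
  have h1' : Filter.Tendsto (fun y => m * y + c) (nhdsWithin p (Ioo p q)) (nhds (f p)) := by
    apply h1.congr'
    filter_upwards [self_mem_nhdsWithin] with y hy using (h y hy)
  have h2 : Filter.Tendsto (fun y => m * y + c) (nhdsWithin p (Ioo p q)) (nhds (m * p + c)) :=
    ((continuous_const.mul continuous_id').add continuous_const).continuousAt.continuousWithinAt
  rw [nhdsWithin_Ioo_eq_nhdsGT hpq] at h1' h2
  exact tendsto_nhds_unique h1' h2

lemma eq_at_right {f : ℝ → ℝ} (hf : ContinuousOn f (Ici 0)) {p q m c : ℝ}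
    (hp : 0 ≤ p) (hpq : p < q) (h : ∀ y ∈ Ioo p q, f y = m * y + c) :
    f q = m * q + c := by
  have hq : (0:ℝ) ≤ q := le_trans hp (le_of_lt hpq)
  have hsub : Ioo p q ⊆ Ici 0 := fun y hy => le_trans hp (le_of_lt hy.1)
  have h1 : Filter.Tendsto f (nhdsWithin q (Ioo p q)) (nhds (f q)) :=
    ((hf q hq).mono hsub)
  have h1' : Filter.Tendsto (fun y => m * y + c) (nhdsWithin q (Ioo p q)) (nhds (f q)) := by
    apply h1.congr'
    filter_upwards [self_mem_nhdsWithin] with y hy using (h y hy)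
  have h2 : Filter.Tendsto (fun y => m * y + c) (nhdsWithin q (Ioo p q)) (nhds (m * q + c)) :=
    ((continuous_const.mul continuous_id').add continuous_const).continuousAt.continuousWithinAt
  rw [nhdsWithin_Ioo_eq_nhdsLT hpq] at h1' h2
  exact tendsto_nhds_unique h1' h2

/-- supporting line: a piece of a convex function lies below it everywhere on `Ici 0`. -/
lemma support_line {f : ℝ → ℝ} (hf : ConvexOn ℝ (Ici 0) f) {u v : ℝ} {m c : ℝ}
    (h0u : 0 ≤ u) (huv : u < v)
    (hpiece : ∀ y, u ≤ y → y ≤ v → f y = m * y + c) :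
    ∀ x, 0 ≤ x → m * x + c ≤ f x := by
  intro x hx
  rcases le_or_gt x v with hxv | hvx
  · rcases le_or_gt u x with hux | hxu
    · rw [hpiece x hux hxv]
    · -- x < u : u between x and v
      set a : ℝ := (v - u) / (v - x) with ha_def
      set b : ℝ := (u - x) / (v - x) with hb_def
      have hvx' : 0 < v - x := by linarith
      have ha' : 0 < a := by rw [ha_def]; apply div_pos <;> linarith
      have ha : 0 ≤ a := le_of_lt ha'
      have hb : 0 ≤ b := by rw [hb_def]; apply div_nonneg <;> linarith
      have hab : a + b = 1 := by rw [ha_def, hb_def]; field_simp; ring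
      have hu : u = a * x + b * v := by rw [ha_def, hb_def]; field_simp; ring
      have hcv : f (a • x + b • v) ≤ a • f x + b • f v :=
        hf.2 hx (le_trans h0u (le_of_lt huv)) ha hb hab
      simp only [smul_eq_mul] at hcv
      rw [← hu] at hcv
      have hfu : f u = m * u + c := hpiece u le_rfl (le_of_lt huv)
      have hfv : f v = m * v + c := hpiece v (le_of_lt huv) le_rfl
      rw [hfu, hfv] at hcv
      have hmu : m * u = m * (a * x) + m * (b * v) := by linear_combination m * hu
      have hc : c * a + c * b = c := by linear_combination c * hab
      have key : a * (m * x + c) ≤ a * f x := by nlinarith [hcv, hmu, hc]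
      exact le_of_mul_le_mul_left key ha'
  · -- v < x : v between u and x
    set a : ℝ := (x - v) / (x - u) with ha_def
    set b : ℝ := (v - u) / (x - u) with hb_def
    have hxu' : 0 < x - u := by linarith
    have ha : 0 ≤ a := by rw [ha_def]; apply div_nonneg <;> linarith
    have hb' : 0 < b := by rw [hb_def]; apply div_pos <;> linarith
    have hb : 0 ≤ b := le_of_lt hb'
    have hab : a + b = 1 := by rw [ha_def, hb_def]; field_simp; ring
    have hv : v = a * u + b * x := by rw [ha_def, hb_def]; field_simp; ring
    have hcv : f (a • u + b • x) ≤ a • f u + b • f x := hf.2 h0u hx ha hb hab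
    simp only [smul_eq_mul] at hcv
    rw [← hv] at hcv
    have hfu : f u = m * u + c := hpiece u le_rfl (le_of_lt huv)
    have hfv : f v = m * v + c := hpiece v (le_of_lt huv) le_rfl
    rw [hfu, hfv] at hcv
    have hmv : m * v = m * (a * u) + m * (b * x) := by linear_combination m * hv
    have hc : c * a + c * b = c := by linear_combination c * hab
    have key : b * (m * x + c) ≤ b * f x := by nlinarith [hcv, hmv, hc]
    exact le_of_mul_le_mul_left key hb'

/-- a nonnegative convex function vanishing at 0 is monotone on `Ici 0`. -/
lemma convex_mono {g : ℝ → ℝ} (hg : ConvexOn ℝ (Ici 0) g) (hg0 : g 0 = 0)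
    (hgpos : ∀ x, 0 ≤ x → 0 ≤ g x) :
    ∀ u v, 0 ≤ u → u ≤ v → g u ≤ g v := by
  intro u v hu huv
  rcases eq_or_lt_of_le (le_trans hu huv : (0:ℝ) ≤ v) with hv0 | hv0
  · have hu0 : u = 0 := le_antisymm (by linarith) hu
    rw [hu0, ← hv0]
  · set a : ℝ := 1 - u / v with ha_def
    set b : ℝ := u / v with hb_def
    have hb : 0 ≤ b := by positivity
    have hb1 : b ≤ 1 := by rw [hb_def]; rw [div_le_one hv0]; linarith
    have ha : 0 ≤ a := by linarith
    have hab : a + b = 1 := by ring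
    have hu' : u = a * 0 + b * v := by rw [hb_def]; field_simp; ring
    have hcv : g (a • (0:ℝ) + b • v) ≤ a • g 0 + b • g v :=
      hg.2 (mem_Ici.2 le_rfl) (mem_Ici.2 (le_of_lt hv0)) ha hb hab
    simp only [smul_eq_mul] at hcv
    rw [← hu', hg0] at hcv
    have : b * g v ≤ g v := by
      nlinarith [hgpos v (le_of_lt hv0)]
    linarith

def RepL (f : ℝ → ℝ) : Prop := ∃ p L, (∀ x, f x = maxA p L x) ∧
  ∀ q ∈ p :: L, ∃ u v : ℝ, 0 ≤ u ∧ u < v ∧ ∀ y, u ≤ y → y ≤ v → f y = (q.1 : ℝ) * y + q.2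

def Good (f : ℝ → ℝ) (T : Finset ℝ) : Prop :=
  ContinuousOn f (Ici 0) ∧ ConvexOn ℝ (Ici 0) f ∧ (∀ x, x ≤ 0 → f x = f 0) ∧
  (∀ t ∈ T, 0 < t) ∧
  ∀ x, 0 < x → x ∉ T → ∃ (m : ℤ) (c δ : ℝ), 0 < δ ∧
    ∀ y ∈ Ici (0:ℝ) ∩ Ioo (x - δ) (x + δ), f y = (m : ℝ) * y + c

/-- from the local data, affine on an open subinterval of `Ioi 0` avoiding `T` -/
lemma affine_of_loc {f : ℝ → ℝ} {T : Finset ℝ}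
    (hloc : ∀ x, 0 < x → x ∉ T → ∃ (m : ℤ) (c δ : ℝ), 0 < δ ∧
      ∀ y ∈ Ici (0:ℝ) ∩ Ioo (x - δ) (x + δ), f y = (m : ℝ) * y + c)
    {s : Set ℝ} (hs : IsOpen s) (hconn : IsPreconnected s) (hne : s.Nonempty)
    (hsub : ∀ x ∈ s, 0 < x ∧ x ∉ T) :
    ∃ (m : ℤ) (c : ℝ), ∀ y ∈ s, f y = (m : ℝ) * y + c := by
  apply locAffine hs hconn hne
  intro x hx
  obtain ⟨hx0, hxT⟩ := hsub x hx
  obtain ⟨m, c, δ, hδ, hy⟩ := hloc x hx0 hxT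
  refine ⟨m, c, Ioo (x - δ) (x + δ) ∩ Ioi 0, (isOpen_Ioo.inter isOpen_Ioi), ⟨⟨by linarith, by linarith⟩, hx0⟩, ?_⟩
  rintro y ⟨hy1, hy2⟩
  exact hy y ⟨mem_Ici.2 (le_of_lt hy2), hy1⟩

lemma rep_base {f : ℝ → ℝ} (hc : ContinuousOn f (Ici 0))
    (hleft : ∀ x, x ≤ 0 → f x = f 0)
    (hloc : ∀ x, 0 < x → x ∉ (∅ : Finset ℝ) → ∃ (m : ℤ) (c δ : ℝ), 0 < δ ∧
      ∀ y ∈ Ici (0:ℝ) ∩ Ioo (x - δ) (x + δ), f y = (m : ℝ) * y + c) :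
    RepL f := by
  obtain ⟨m, c, hmc⟩ := affine_of_loc hloc isOpen_Ioi isPreconnected_Ioi ⟨1, by norm_num⟩
    (fun x hx => ⟨hx, Finset.notMem_empty x⟩)
  have hf0 : f 0 = c := by
    have := eq_at_left hc (le_refl (0:ℝ)) (zero_lt_one) (fun y hy => hmc y hy.1)
    simpa using this
  have hall : ∀ y, 0 ≤ y → f y = (m : ℝ) * y + c := by
    intro y hy
    rcases eq_or_lt_of_le hy with h | h
    · rw [← h, hf0]; ring
    · exact hmc y h
  refine ⟨(m, c), [], ?_, ?_⟩
  · intro x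
    rcases le_or_gt x 0 with hx | hx
    · rw [hleft x hx, hf0, maxA, lineA]
      simp [max_eq_right hx]
    · rw [hall x (le_of_lt hx), maxA, lineA]
      simp [max_eq_left (le_of_lt hx)]
  · intro q hq
    simp only [List.mem_singleton] at hq
    subst hq
    exact ⟨0, 1, le_rfl, zero_lt_one, fun y hy _ => hall y hy⟩

theorem rep_of_good : ∀ (n : ℕ) (T : Finset ℝ), T.card ≤ n → ∀ f, Good f T → RepL f := by
  intro n
  induction n with
  | zero =>
      intro T hT f hf
      have : T = ∅ := Finset.card_eq_zero.1 (le_antisymm hT (Nat.zero_le _))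
      subst this
      exact rep_base hf.1 hf.2.2.1 hf.2.2.2.2
  | succ n ih =>
      intro T hT f hf
      obtain ⟨hc, hcv, hleft, hTpos, hloc⟩ := hf
      rcases Finset.eq_empty_or_nonempty T with rfl | hTne
      · exact rep_base hc hleft hloc
      -- peel minimal breakpoint
      set t := T.min' hTne with ht_def
      have ht0 : 0 < t := hTpos t (T.min'_mem hTne)
      -- f is affine on (0, t)
      obtain ⟨m0, c0, hm0⟩ : ∃ (m : ℤ) (c : ℝ), ∀ y ∈ Ioo (0:ℝ) t, f y = (m:ℝ) * y + c := by
        apply affine_of_loc hloc isOpen_Ioo isPreconnected_Ioo ⟨t/2, by constructor <;> linarith⟩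
        intro x hx
        refine ⟨hx.1, fun hxT => ?_⟩
        exact absurd (T.min'_le x hxT) (by rw [← ht_def]; linarith [hx.2])
      have hf0 : f 0 = (m0 : ℝ) * 0 + c0 := eq_at_left hc le_rfl ht0 hm0
      have hft : f t = (m0 : ℝ) * t + c0 := eq_at_right hc le_rfl ht0 hm0
      have hpiece0 : ∀ y, 0 ≤ y → y ≤ t → f y = (m0 : ℝ) * y + c0 := by
        intro y h1 h2
        rcases eq_or_lt_of_le h1 with h | h
        · rw [← h]; exact hf0
        rcases eq_or_lt_of_le h2 with h' | h'
        · rw [h']; exact hft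
        exact hm0 y ⟨h, h'⟩
      -- the supporting line
      have hsupp : ∀ x, 0 ≤ x → (m0 : ℝ) * x + c0 ≤ f x :=
        support_line hcv le_rfl ht0 hpiece0
      -- h and h'
      set h : ℝ → ℝ := fun x => f x - lineA (m0, c0) x with hh_def
      have hline_eq : ∀ x, 0 ≤ x → lineA (m0, c0) x = (m0:ℝ) * x + c0 := by
        intro x hx; rw [lineA_eq_lineP hx]; rfl
      have hh_nonneg : ∀ x, 0 ≤ h x := by
        intro x
        rcases le_or_gt x 0 with hx | hx
        · have : lineA (m0, c0) x = c0 := lineA_of_nonpos hx _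
          rw [hh_def]; simp only [this, hleft x hx, hf0]; linarith [hf0]
        · rw [hh_def]; simp only [hline_eq x (le_of_lt hx)]
          linarith [hsupp x (le_of_lt hx)]
      have hh_zero : ∀ x, x ≤ t → h x = 0 := by
        intro x hx
        rcases le_or_gt x 0 with hx0 | hx0
        · rw [hh_def]; simp only [lineA_of_nonpos hx0, hleft x hx0, hf0]; ring
        · rw [hh_def]; simp only [hline_eq x (le_of_lt hx0), hpiece0 x (le_of_lt hx0) hx]; ring
      have hh_conv : ConvexOn ℝ (Ici 0) h := by
        rw [hh_def]
        have := hcv.sub (concaveOn_congr (convex_Ici 0)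
          (fun x hx => (hline_eq x hx).symm) (concaveOn_lineP (m0:ℝ) c0) : ConcaveOn ℝ (Ici 0) (lineA (m0,c0)))
        exact this
      have hh_cont : ContinuousOn h (Ici 0) := by
        rw [hh_def]
        exact hc.sub ((continuous_lineA (m0, c0)).continuousOn)
      -- shifted function
      set h' : ℝ → ℝ := fun y => h (y + t) with hh'_def
      have hh'_h : ∀ y, h' y = h (y + t) := fun y => rfl
      have hh'_at : ∀ y, h (y) = h' (y - t) := by
        intro y; rw [hh'_h]; congr 1; ring
      have hh'_zero : h' 0 = 0 := by rw [hh'_h]; exact hh_zero _ (by linarith)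
      have hh'_nonneg : ∀ y, 0 ≤ h' y := fun y => hh_nonneg _
      have hh'_conv : ConvexOn ℝ (Ici 0) h' := by
        constructor
        · exact convex_Ici 0
        · intro x hx y hy a b ha hb hab
          simp only [smul_eq_mul]
          have e1 : a * x + b * y + t = a * (x + t) + b * (y + t) := by
            linear_combination (-t) * hab
          rw [hh'_h, hh'_h, hh'_h, e1]
          have hx' : x + t ∈ Ici (0:ℝ) := by
            simp only [mem_Ici] at hx ⊢; linarith
          have hy' : y + t ∈ Ici (0:ℝ) := by
            simp only [mem_Ici] at hy ⊢; linarith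
          have := hh_conv.2 hx' hy' ha hb hab
          simpa using this
      set T' : Finset ℝ := (T.erase t).image (fun u => u - t) with hT'_def
      have hT'_card : T'.card ≤ n := by
        have h1 : T'.card ≤ (T.erase t).card := Finset.card_image_le
        have h2 : (T.erase t).card = T.card - 1 := Finset.card_erase_of_mem (T.min'_mem hTne)
        omega
      have hGood' : Good h' T' := by
        refine ⟨?_, hh'_conv, ?_, ?_, ?_⟩
        · -- continuity
          apply hh_cont.comp (Continuous.continuousOn (by fun_prop))
          intro y hy
          simp only [mem_Ici] at hy ⊢
          linarith
        · intro x hx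
          rw [hh'_h, hh'_h, hh_zero _ (by linarith), hh_zero _ (by linarith)]
        · intro s hs
          rw [hT'_def] at hs
          obtain ⟨u, hu, rfl⟩ := Finset.mem_image.1 hs
          have hut : u ≠ t := (Finset.mem_erase.1 hu).1
          have huT : u ∈ T := (Finset.mem_erase.1 hu).2
          have := T.min'_le u huT
          rw [← ht_def] at this
          cases lt_or_eq_of_le this with
          | inl h => linarith
          | inr h => exact absurd h.symm hut
        · intro x hx hxT'
          have hxtT : x + t ∉ T := by
            intro hmem
            apply hxT'
            rw [hT'_def]
            refine Finset.mem_image.2 ⟨x + t, Finset.mem_erase.2 ⟨by intro h; linarith, hmem⟩, by ring⟩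
          obtain ⟨m, c, δ, hδ, hy⟩ := hloc (x + t) (by linarith) hxtT
          refine ⟨m - m0, c - c0 + ((m:ℝ) - m0) * t, δ, hδ, ?_⟩
          rintro y ⟨hy0, hy1, hy2⟩
          simp only [mem_Ici] at hy0
          have hyt : y + t ∈ Ici (0:ℝ) ∩ Ioo (x + t - δ) (x + t + δ) := by
            constructor
            · simp only [mem_Ici]; linarith
            · constructor <;> [linarith; linarith]
          have hfyt : f (y + t) = (m:ℝ) * (y + t) + c := hy _ hyt
          rw [hh'_h, hh_def]
          simp only
          rw [hfyt, hline_eq _ (by linarith : (0:ℝ) ≤ y + t)]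
          push_cast
          ring
      obtain ⟨p', L', hrep', hpieces'⟩ := ih T' hT'_card h' hGood'
      -- facts about the lines of h'
      have hline_le : ∀ q ∈ p' :: L', ∀ y : ℝ, lineA q y ≤ h' y := by
        intro q hq y
        rw [hrep' y]
        exact le_maxA p' L' q hq
      have hc_le : ∀ q ∈ p' :: L', q.2 ≤ (0:ℝ) := by
        intro q hq
        have := hline_le q hq 0
        rw [hh'_zero, lineA_of_nonpos le_rfl] at this
        exact this
      have hm_nonneg : ∀ q ∈ p' :: L', (0:ℝ) ≤ (q.1 : ℝ) := by
        intro q hq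
        obtain ⟨u, v, hu, huv, hq2⟩ := hpieces' q hq
        have hmono := convex_mono hh'_conv hh'_zero (fun x hx => hh'_nonneg x) u v hu (le_of_lt huv)
        rw [hq2 u le_rfl (le_of_lt huv), hq2 v (le_of_lt huv) le_rfl] at hmono
        nlinarith
      have h'_att : ∀ y : ℝ, ∃ q ∈ p' :: L', h' y = lineA q y := by
        intro y
        obtain ⟨q, hq, he⟩ := maxA_attain (x := y) p' L'
        exact ⟨q, hq, by rw [hrep' y, he]⟩
      -- the final representation
      set shift : (ℤ × ℝ) → (ℤ × ℝ) := fun q => (q.1 + m0, q.2 + c0 - (q.1 : ℝ) * t) with hshift_def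
      have hfx_eq : ∀ x, f x = lineA (m0, c0) x + h x := by
        intro x; rw [hh_def]; ring
      refine ⟨(m0, c0), (p' :: L').map shift, ?_, ?_⟩
      · intro x
        apply le_antisymm
        · -- f x ≤ maxA : find attaining line
          rcases le_or_gt x t with hxt | hxt
          · have hfeq : f x = lineA (m0, c0) x := by
              rcases le_or_gt x 0 with hx0 | hx0
              · rw [hleft x hx0, lineA_of_nonpos hx0]
                simp only [hf0] at *
                linarith [hf0]
              · rw [hpiece0 x (le_of_lt hx0) hxt, hline_eq x (le_of_lt hx0)]
            rw [hfeq]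
            exact le_maxA _ _ _ List.mem_cons_self
          · obtain ⟨q, hq, hqe⟩ := h'_att (x - t)
            have hx0 : (0:ℝ) < x := lt_trans ht0 hxt
            have hfeq : f x = lineA (shift q) x := by
              rw [hfx_eq x, hh'_at x, hqe, hline_eq x (le_of_lt hx0),
                lineA_eq_lineP (by linarith : (0:ℝ) ≤ x - t), lineA_eq_lineP (le_of_lt hx0)]
              rw [hshift_def]
              simp only [lineP]
              push_cast
              ring
            rw [hfeq]
            exact le_maxA _ _ _ (List.mem_cons_of_mem _ (List.mem_map_of_mem hq))
        · -- maxA ≤ f x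
          apply maxA_le
          intro r hr
          rcases List.mem_cons.1 hr with hr | hr
          · subst hr
            rcases le_or_gt x 0 with hx0 | hx0
            · rw [lineA_of_nonpos hx0, hleft x hx0]
              simp only
              linarith [hf0]
            · rw [hline_eq x (le_of_lt hx0)]
              exact hsupp x (le_of_lt hx0)
          · obtain ⟨q, hq, rfl⟩ := List.mem_map.1 hr
            have key : (q.1 : ℝ) * max x 0 + q.2 - (q.1:ℝ) * t ≤ h x := by
              have h1 : lineA q (x - t) ≤ h' (x - t) := hline_le q hq (x - t)
              rw [← hh'_at x] at h1
              have h2 : max x 0 - t ≤ max (x - t) 0 := by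
                rcases le_total x 0 with hx | hx
                · rw [max_eq_right hx]
                  have := le_max_right (x - t) 0
                  linarith
                · rw [max_eq_left hx]
                  exact le_max_left _ _
              have h3 : (q.1:ℝ) * (max x 0 - t) ≤ (q.1:ℝ) * max (x - t) 0 :=
                mul_le_mul_of_nonneg_left h2 (hm_nonneg q hq)
              have h4 : lineA q (x - t) = (q.1:ℝ) * max (x - t) 0 + q.2 := rfl
              rw [h4] at h1
              nlinarith
            rw [hfx_eq x]
            have h5 : lineA (shift q) x = (q.1:ℝ) * max x 0 + q.2 - (q.1:ℝ) * t + ((m0:ℝ) * max x 0 + c0) := by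
              rw [hshift_def]
              simp only [lineA]
              push_cast
              ring
            have h6 : lineA (m0, c0) x = (m0:ℝ) * max x 0 + c0 := rfl
            rw [h5, h6]
            linarith
      · -- pieces
        intro r hr
        rcases List.mem_cons.1 hr with hr | hr
        · subst hr
          exact ⟨0, t, le_rfl, ht0, hpiece0⟩
        · obtain ⟨q, hq, rfl⟩ := List.mem_map.1 hr
          obtain ⟨u, v, hu, huv, hq2⟩ := hpieces' q hq
          refine ⟨u + t, v + t, by linarith, by linarith, ?_⟩
          intro y h1 h2
          have hy0 : (0:ℝ) ≤ y := by linarith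
          have : h' (y - t) = (q.1:ℝ) * (y - t) + q.2 := hq2 (y - t) (by linarith) (by linarith)
          rw [hfx_eq y, hh'_at y, this, hline_eq y hy0, hshift_def]
          simp only
          push_cast
          ring

lemma line_gap {m1 c1 m2 c2 x : ℝ} (h : m2 * x + c2 < m1 * x + c1) :
    ∃ δ > 0, ∀ y, |y - x| < δ → m2 * y + c2 < m1 * y + c1 := by
  set g : ℝ := (m1 * x + c1) - (m2 * x + c2) with hg_def
  have hg : 0 < g := by rw [hg_def]; linarith
  refine ⟨g / (|m1 - m2| + 1), by positivity, ?_⟩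
  intro y hy
  have habs : (m2 - m1) * (y - x) ≤ |m1 - m2| * |y - x| := by
    calc (m2 - m1) * (y - x) ≤ |(m2 - m1) * (y - x)| := le_abs_self _
      _ = |m2 - m1| * |y - x| := abs_mul _ _
      _ = |m1 - m2| * |y - x| := by rw [abs_sub_comm m2 m1]
  have h1 : |m1 - m2| * |y - x| ≤ (|m1 - m2| + 1) * |y - x| := by
    have := abs_nonneg (y - x)
    nlinarith
  have h2 : (|m1 - m2| + 1) * |y - x| < (|m1 - m2| + 1) * (g / (|m1 - m2| + 1)) := by
    apply mul_lt_mul_of_pos_left hy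
    positivity
  have h3 : (|m1 - m2| + 1) * (g / (|m1 - m2| + 1)) = g := by
    field_simp
  have h4 : (m2 - m1) * (y - x) < g := by linarith
  have : m2 * y + c2 - (m1 * y + c1) = (m2 - m1) * (y - x) - g := by
    rw [hg_def]; ring
  linarith

lemma maxP_local : ∀ (p : ℤ × ℝ) (L : List (ℤ × ℝ)) (x : ℝ),
    (∀ q ∈ p :: L, ∀ r ∈ p :: L,
      (q.1 : ℝ) * x + q.2 = (r.1 : ℝ) * x + r.2 → (q.1 : ℝ) = r.1 ∧ q.2 = r.2) →
    ∃ q ∈ p :: L, ∃ δ > 0, ∀ y, |y - x| < δ → maxP p L y = (q.1 : ℝ) * y + q.2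
  | p, [], x, _ => ⟨p, by simp, 1, zero_lt_one, fun y _ => rfl⟩
  | p, q0 :: rest, x, hx => by
      obtain ⟨r, hr, δ1, hδ1, h1⟩ := maxP_local q0 rest x (by
        intro q hq r' hr' he
        exact hx q (List.mem_cons_of_mem _ hq) r' (List.mem_cons_of_mem _ hr') he)
      have hmem : r ∈ p :: q0 :: rest := List.mem_cons_of_mem _ hr
      rcases lt_trichotomy ((p.1 : ℝ) * x + p.2) ((r.1 : ℝ) * x + r.2) with hlt | heq | hgt
      · obtain ⟨δ2, hδ2, h2⟩ := line_gap hlt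
        refine ⟨r, hmem, min δ1 δ2, lt_min hδ1 hδ2, ?_⟩
        intro y hy
        have hy1 : |y - x| < δ1 := lt_of_lt_of_le hy (min_le_left _ _)
        have hy2 : |y - x| < δ2 := lt_of_lt_of_le hy (min_le_right _ _)
        rw [maxP]
        unfold lineP
        rw [h1 y hy1]
        exact max_eq_right (le_of_lt (h2 y hy2))
      · obtain ⟨hm, hc⟩ := hx p (by simp) r hmem heq
        refine ⟨p, by simp, δ1, hδ1, ?_⟩
        intro y hy
        rw [maxP]
        unfold lineP
        rw [h1 y hy]
        have : (r.1 : ℝ) * y + r.2 = (p.1 : ℝ) * y + p.2 := by rw [← hm, ← hc]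
        rw [this]
        exact max_self _
      · obtain ⟨δ2, hδ2, h2⟩ := line_gap hgt
        refine ⟨p, by simp, min δ1 δ2, lt_min hδ1 hδ2, ?_⟩
        intro y hy
        have hy1 : |y - x| < δ1 := lt_of_lt_of_le hy (min_le_left _ _)
        have hy2 : |y - x| < δ2 := lt_of_lt_of_le hy (min_le_right _ _)
        rw [maxP]
        unfold lineP
        rw [h1 y hy1]
        exact max_eq_left (le_of_lt (h2 y hy2))

def crossF (S : List (ℤ × ℝ)) : Finset ℝ :=
  (S.product S).toFinset.image
    (fun pr => if pr.1.1 = pr.2.1 then 0 else ((pr.2.2 - pr.1.2) / ((pr.1.1 : ℝ) - pr.2.1)))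

lemma RZmem_maxA (p : ℤ × ℝ) (L : List (ℤ × ℝ)) : RZmem (maxA p L) := by
  refine ⟨(continuous_maxA p L).continuousOn, convexOn_maxA p L, ?_, ?_⟩
  · refine ⟨insert 0 (crossF (p :: L)), ?_⟩
    intro x hx hxF
    have hx0 : 0 < x := by
      rcases eq_or_lt_of_le (mem_Ici.1 hx) with h | h
      · exact absurd (by rw [← h]; exact Finset.mem_insert_self 0 _) hxF
      · exact h
    have hxc : x ∉ crossF (p :: L) := fun h => hxF (Finset.mem_insert_of_mem h)
    have hcond : ∀ q ∈ p :: L, ∀ r ∈ p :: L,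
        (q.1 : ℝ) * x + q.2 = (r.1 : ℝ) * x + r.2 → (q.1 : ℝ) = r.1 ∧ q.2 = r.2 := by
      intro q hq r hr he
      by_cases hqr : q.1 = r.1
      · constructor
        · exact_mod_cast hqr
        · rw [hqr] at he; linarith
      · exfalso
        apply hxc
        refine Finset.mem_image.2 ⟨(q, r), ?_, ?_⟩
        · rw [List.mem_toFinset]
          exact List.pair_mem_product.2 ⟨hq, hr⟩
        · rw [if_neg hqr]
          have hne : ((q.1 : ℝ)) - r.1 ≠ 0 := by
            intro hz
            apply hqr
            have : (q.1 : ℝ) = r.1 := by linarith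
            exact_mod_cast this
          field_simp
          linarith
    obtain ⟨q, hq, δ, hδ, hloc⟩ := maxP_local p L x hcond
    refine ⟨q.1, q.2, δ, hδ, ?_⟩
    rintro y ⟨hy0, hy1, hy2⟩
    rw [maxA_eq_maxP (mem_Ici.1 hy0)]
    apply hloc
    rw [abs_sub_lt_iff]
    constructor <;> linarith
  · intro x hx
    exact maxA_of_nonpos hx p L

lemma RZmem_rep {f : ℝ → ℝ} (hf : RZmem f) : ∃ p L, ∀ x, f x = maxA p L x := by
  obtain ⟨hc, hcv, ⟨F, hloc⟩, hleft⟩ := hf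
  have hgood : Good f (F.filter (0 < ·)) := by
    refine ⟨hc, hcv, hleft, ?_, ?_⟩
    · intro t ht
      exact (Finset.mem_filter.1 ht).2
    · intro x hx hxT
      apply hloc x (mem_Ici.2 (le_of_lt hx))
      intro hxF
      exact hxT (Finset.mem_filter.2 ⟨hxF, hx⟩)
  obtain ⟨p, L, hrep, _⟩ := rep_of_good (F.filter (0 < ·)).card _ le_rfl f hgood
  exact ⟨p, L, hrep⟩

/-- Every map `φ : R(ℤ) → ℝ ∪ {−∞}` with `φ(max(f,g)) = max(φ f, φ g)`,
`φ(f + g) = φ f + φ g` and `φ(c) = c` on constants is the evaluation at a unique point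
`λ ∈ [0,∞)`; hence `λ ↦ eval_λ` is a bijection of `[0,∞)` onto the set of such maps. -/

theorem statement0 (φ : (ℝ → ℝ) → WithBot ℝ)
    (hmax : ∀ f g : ℝ → ℝ, RZmem f → RZmem g →
      φ (fun x => max (f x) (g x)) = max (φ f) (φ g))
    (hadd : ∀ f g : ℝ → ℝ, RZmem f → RZmem g →
      φ (fun x => f x + g x) = φ f + φ g)
    (hconst : ∀ c : ℝ, φ (fun _ => c) = (c : WithBot ℝ)) :
    ∃! lam : ℝ, 0 ≤ lam ∧ ∀ f : ℝ → ℝ, RZmem f → φ f = ((f lam : ℝ) : WithBot ℝ) := by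
  have hRZline : ∀ p : ℤ × ℝ, RZmem (lineA p) := fun p => RZmem_maxA p []
  have hconstRZ : ∀ c : ℝ, RZmem (fun _ => c) := by
    intro c
    have h := hRZline (0, c)
    have e : lineA ((0 : ℤ), c) = fun _ : ℝ => c := funext fun x => by simp [lineA]
    rwa [e] at h
  set g : ℝ → ℝ := lineA (1, 0) with hg_def
  have hgRZ : RZmem g := hRZline (1, 0)
  -- φ g is a nonnegative real
  have hstep : φ g = max (φ g) ((0 : ℝ) : WithBot ℝ) := by
    have e : (fun x => max (g x) ((fun _ : ℝ => (0:ℝ)) x)) = g := by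
      funext x
      have : 0 ≤ g x := by
        rw [hg_def]
        simp only [lineA]
        push_cast
        simp only [one_mul, add_zero]
        exact le_max_right x 0
      exact max_eq_left this
    have := hmax g (fun _ => (0:ℝ)) hgRZ (hconstRZ 0)
    rw [e, hconst 0] at this
    exact this
  have hle : ((0 : ℝ) : WithBot ℝ) ≤ φ g := by
    rw [hstep]; exact le_max_right _ _
  obtain ⟨lam, hφg⟩ : ∃ lam : ℝ, φ g = (lam : WithBot ℝ) := by
    cases hc : φ g with
    | bot => rw [hc] at hle; exact absurd hle (by simp)
    | coe lam => exact ⟨lam, rfl⟩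
  have hlam0 : 0 ≤ lam := by
    rw [hφg] at hle
    exact_mod_cast hle
  -- φ on lines with natural slope
  have phi_nat : ∀ (n : ℕ) (c : ℝ),
      φ (lineA ((n : ℤ), c)) = (((n : ℝ) * lam + c : ℝ) : WithBot ℝ) := by
    intro n
    induction n with
    | zero =>
        intro c
        have e : lineA (((0 : ℕ) : ℤ), c) = fun _ : ℝ => c := funext fun x => by simp [lineA]
        rw [e, hconst c]
        congr 1
        push_cast
        ring
    | succ n ih =>
        intro c
        have e : (fun x => lineA ((n : ℤ), c) x + g x) = lineA ((((n + 1) : ℕ) : ℤ), c) := by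
          funext x
          rw [hg_def]
          simp only [lineA]
          push_cast
          ring
        have h := hadd (lineA ((n : ℤ), c)) g (hRZline _) hgRZ
        rw [e] at h
        rw [h, ih c, hφg, ← WithBot.coe_add]
        congr 1
        push_cast
        ring
  -- φ on all lines
  have phi_line : ∀ p : ℤ × ℝ,
      φ (lineA p) = (((p.1 : ℝ) * lam + p.2 : ℝ) : WithBot ℝ) := by
    rintro ⟨m, c⟩
    simp only
    rcases le_or_gt 0 m with hm | hm
    · obtain ⟨n, rfl⟩ := Int.eq_ofNat_of_zero_le hm
      rw [phi_nat n c]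
      congr 1 <;> (push_cast; try ring)
    · have hn : (((-m).toNat : ℤ)) = -m := Int.toNat_of_nonneg (by linarith)
      have e : (fun x => lineA (m, c) x + lineA (-m, 0) x) = (fun _ : ℝ => c) := by
        funext x
        simp only [lineA]
        push_cast
        ring
      have h := hadd (lineA (m, c)) (lineA (-m, 0)) (hRZline _) (hRZline _)
      rw [e, hconst c] at h
      have hneg : φ (lineA (-m, 0)) = ((((-m : ℤ) : ℝ) * lam + 0 : ℝ) : WithBot ℝ) := by
        rw [← hn, phi_nat ((-m).toNat) 0]
        congr 1 <;> (push_cast; try ring)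
      rw [hneg] at h
      cases hc : φ (lineA (m, c)) with
      | bot =>
          rw [hc] at h
          simp at h
      | coe s =>
          rw [hc] at h
          rw [← WithBot.coe_add] at h
          have hs : s + (((-m : ℤ) : ℝ) * lam + 0) = c := by exact_mod_cast h.symm
          have : s = (m : ℝ) * lam + c := by push_cast at hs ⊢; linarith
          rw [this]
  -- φ on finite maxima of lines
  have phi_maxA : ∀ (L : List (ℤ × ℝ)) (p : ℤ × ℝ),
      φ (maxA p L) = ((maxA p L lam : ℝ) : WithBot ℝ) := by
    intro L
    induction L with
    | nil =>
        intro p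
        have e : maxA p [] = lineA p := funext fun x => rfl
        rw [e, phi_line p]
        have : lineA p lam = (p.1 : ℝ) * lam + p.2 := by
          rw [lineA_eq_lineP hlam0]; rfl
        rw [this]
    | cons q r ih =>
        intro p
        have e : (fun x => max (lineA p x) (maxA q r x)) = maxA p (q :: r) :=
          funext fun x => rfl
        have h := hmax (lineA p) (maxA q r) (hRZline p) (RZmem_maxA q r)
        rw [e] at h
        rw [h, phi_line p, ih q]
        have e2 : lineA p lam = (p.1 : ℝ) * lam + p.2 := by
          rw [lineA_eq_lineP hlam0]; rfl
        have e3 : maxA p (q :: r) lam = max (lineA p lam) (maxA q r lam) := rfl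
        rw [e3, e2, WithBot.coe_max]
  refine ⟨lam, ⟨hlam0, ?_⟩, ?_⟩
  · intro f hf
    obtain ⟨p, L, hrep⟩ := RZmem_rep hf
    have e : f = maxA p L := funext hrep
    rw [e, phi_maxA L p]
  · rintro y ⟨hy0, hy⟩
    have h1 : φ g = ((g y : ℝ) : WithBot ℝ) := hy g hgRZ
    have h2 : g y = y := by
      rw [hg_def]
      simp [lineA, max_eq_left hy0]
    rw [h2, hφg] at h1
    exact_mod_cast h1.symm

end
end

section
/- For each object Ω of C let J(Ω) be the collection of sieves S on Ω that contain a family of inclusion morphisms (morphisms given by n = 1) {Ω_i ⊆ Ω : i ∈ I} with ∪_i Ω_i = Ω. Then J is a Grothendieck topology on C, and J is subcanonical: for every object V of C the representable presheaf Hom_C(−, V) is a sheaf for J. -/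
open CategoryTheory

/-- Objects of the category `𝒞`: (possibly empty) bounded open intervals `Ω ⊆ [0,∞)`, i.e.
intervals `(a,b)` with `0 ≤ a`, or `[0,b)`. -/
structure SInt where
  carrier : Set ℝ
  is_itv : (∃ a b : ℝ, 0 ≤ a ∧ carrier = Set.Ioo a b) ∨ (∃ b : ℝ, carrier = Set.Ico 0 b)

/-- Morphisms `Ω ⟶ Ω'` are given by positive integers `n` with `nΩ ⊆ Ω'` (realized as the maps
`x ↦ nx`, so that the empty interval has exactly one morphism to any object). -/
instance : Category SInt where
  Hom Ω Ω' := {φ : Ω.carrier → Ω'.carrier // ∃ n : ℕ+, ∀ x : Ω.carrier, (φ x : ℝ) = (n : ℝ) * (x : ℝ)}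
  id Ω := ⟨fun x => x, 1, fun x => by simp⟩
  comp {A B C} f g := ⟨fun x => g.1 (f.1 x), by
    obtain ⟨n, hn⟩ := f.2
    obtain ⟨m, hm⟩ := g.2
    refine ⟨m * n, fun x => ?_⟩
    rw [hm, hn]
    push_cast
    ring⟩
  id_comp f := Subtype.ext rfl
  comp_id f := Subtype.ext rfl
  assoc f g h := Subtype.ext rfl

/-- `f : Ω' ⟶ Ω` is an inclusion morphism (`n = 1`, i.e. `Ω' ⊆ Ω`). -/
def IsInclusion {Ω' Ω : SInt} (f : Ω' ⟶ Ω) : Prop :=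
  ∀ y : Ω'.carrier, ((f.1 y : ℝ)) = (y : ℝ)

namespace SIntProof

lemma hom_ext {A B : SInt} {f g : A ⟶ B}
    (h : ∀ x : A.carrier, ((f.1 x : ℝ)) = (g.1 x : ℝ)) : f = g :=
  Subtype.ext (funext fun x => Subtype.ext (h x))

lemma comp_val {A B C : SInt} (f : A ⟶ B) (g : B ⟶ C) (x : A.carrier) :
    ((f ≫ g).1 x : ℝ) = (g.1 (f.1 x) : ℝ) := rfl

def mkHom (A B : SInt) (n : ℕ+) (h : ∀ x : A.carrier, (n : ℝ) * x ∈ B.carrier) : A ⟶ B :=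
  ⟨fun x => ⟨(n : ℝ) * x, h x⟩, n, fun _ => rfl⟩

lemma mkHom_val (A B : SInt) (n : ℕ+) (h) (x : A.carrier) :
    (((mkHom A B n h).1 x : ℝ)) = (n : ℝ) * x := rfl

def inclHom (A B : SInt) (h : A.carrier ⊆ B.carrier) : A ⟶ B :=
  ⟨fun x => ⟨x, h x.2⟩, 1, fun x => by norm_num⟩

lemma inclHom_val (A B : SInt) (h) (x : A.carrier) :
    (((inclHom A B h).1 x : ℝ)) = (x : ℝ) := rfl

lemma isInclusion_inclHom (A B : SInt) (h) : IsInclusion (inclHom A B h) := fun _ => rfl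

lemma subset_of_isInclusion {A B : SInt} {f : A ⟶ B} (hf : IsInclusion f) :
    A.carrier ⊆ B.carrier := fun z hz => by
  have := (f.1 ⟨z, hz⟩).2
  rwa [hf ⟨z, hz⟩] at this

lemma nonneg (A : SInt) : ∀ z ∈ A.carrier, (0:ℝ) ≤ z := by
  rcases A.is_itv with ⟨a, b, ha, hA⟩ | ⟨b, hA⟩ <;> intro z hz <;> rw [hA] at hz
  · exact ha.trans hz.1.le
  · exact hz.1

lemma posOpen (A : SInt) : IsOpen (A.carrier ∩ Set.Ioi 0) := by
  rcases A.is_itv with ⟨a, b, ha, hA⟩ | ⟨b, hA⟩ <;> rw [hA]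
  · exact isOpen_Ioo.inter isOpen_Ioi
  · have : Set.Ico (0:ℝ) b ∩ Set.Ioi 0 = Set.Ioo 0 b := by
      ext z; simp only [Set.mem_inter_iff, Set.mem_Ico, Set.mem_Ioi, Set.mem_Ioo]
      constructor
      · rintro ⟨⟨_, h2⟩, h3⟩; exact ⟨h3, h2⟩
      · rintro ⟨h1, h2⟩; exact ⟨⟨h1.le, h2⟩, h1⟩
    rw [this]; exact isOpen_Ioo

lemma posPreconnected (A : SInt) : IsPreconnected (A.carrier ∩ Set.Ioi 0) := by
  rcases A.is_itv with ⟨a, b, ha, hA⟩ | ⟨b, hA⟩ <;> rw [hA]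
  · have : Set.Ioo a b ∩ Set.Ioi 0 = Set.Ioo a b :=
      Set.inter_eq_left.mpr (fun z hz => ha.trans_lt hz.1)
    rw [this]; exact isPreconnected_Ioo
  · have : Set.Ico (0:ℝ) b ∩ Set.Ioi 0 = Set.Ioo 0 b := by
      ext z; simp only [Set.mem_inter_iff, Set.mem_Ico, Set.mem_Ioi, Set.mem_Ioo]
      constructor
      · rintro ⟨⟨_, h2⟩, h3⟩; exact ⟨h3, h2⟩
      · rintro ⟨h1, h2⟩; exact ⟨⟨h1.le, h2⟩, h1⟩
    rw [this]; exact isPreconnected_Ioo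

lemma posPoint (A : SInt) (h : A.carrier.Nonempty) : ∃ p : ℝ, p ∈ A.carrier ∧ 0 < p := by
  obtain ⟨z, hz⟩ := h
  rcases A.is_itv with ⟨a, b, ha, hA⟩ | ⟨b, hA⟩ <;> rw [hA] at hz ⊢
  · exact ⟨z, hz, ha.trans_lt hz.1⟩
  · have hb : 0 < b := lt_of_le_of_lt hz.1 hz.2
    exact ⟨b / 2, ⟨by linarith, by linarith⟩, by linarith⟩

def inter (A B : SInt) : SInt where
  carrier := A.carrier ∩ B.carrier
  is_itv := by
    rcases A.is_itv with ⟨a, b, ha, hA⟩ | ⟨b, hA⟩ <;>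
      rcases B.is_itv with ⟨c, d, hc, hB⟩ | ⟨d, hB⟩ <;> rw [hA, hB]
    · exact Or.inl ⟨max a c, min b d, le_max_of_le_left ha, Set.Ioo_inter_Ioo⟩
    · refine Or.inl ⟨a, min b d, ha, ?_⟩
      ext z
      simp only [Set.mem_inter_iff, Set.mem_Ioo, Set.mem_Ico, lt_min_iff]
      constructor
      · rintro ⟨⟨h1, h2⟩, ⟨h3, h4⟩⟩; exact ⟨h1, h2, h4⟩
      · rintro ⟨h1, h2, h3⟩; exact ⟨⟨h1, h2⟩, ⟨(ha.trans h1.le), h3⟩⟩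
    · refine Or.inl ⟨c, min b d, hc, ?_⟩
      ext z
      simp only [Set.mem_inter_iff, Set.mem_Ioo, Set.mem_Ico, lt_min_iff]
      constructor
      · rintro ⟨⟨h1, h2⟩, ⟨h3, h4⟩⟩; exact ⟨h3, h2, h4⟩
      · rintro ⟨h1, h2, h3⟩; exact ⟨⟨hc.trans h1.le, h2⟩, ⟨h1, h3⟩⟩
    · refine Or.inr ⟨min b d, ?_⟩
      ext z
      simp only [Set.mem_inter_iff, Set.mem_Ico, lt_min_iff]
      constructor
      · rintro ⟨⟨h1, h2⟩, ⟨h3, h4⟩⟩; exact ⟨h1, h2, h4⟩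
      · rintro ⟨h1, h2, h3⟩; exact ⟨⟨h1, h2⟩, ⟨h1, h3⟩⟩

def preScale (A : SInt) (m : ℕ+) : SInt where
  carrier := {z : ℝ | (m : ℝ) * z ∈ A.carrier}
  is_itv := by
    have hm : (0:ℝ) < (m : ℝ) := by exact_mod_cast m.pos
    rcases A.is_itv with ⟨a, b, ha, hA⟩ | ⟨b, hA⟩ <;> rw [hA]
    · refine Or.inl ⟨a / m, b / m, by positivity, ?_⟩
      ext z
      simp only [Set.mem_setOf_eq, Set.mem_Ioo, div_lt_iff₀ hm, lt_div_iff₀ hm]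
      constructor
      · rintro ⟨h1, h2⟩; exact ⟨by linarith [h1], by linarith [h2]⟩
      · rintro ⟨h1, h2⟩; exact ⟨by linarith [h1], by linarith [h2]⟩
    · refine Or.inr ⟨b / m, ?_⟩
      ext z
      simp only [Set.mem_setOf_eq, Set.mem_Ico, lt_div_iff₀ hm]
      constructor
      · rintro ⟨h1, h2⟩; exact ⟨nonneg_of_mul_nonneg_right (by linarith) hm, by linarith⟩
      · rintro ⟨h1, h2⟩; exact ⟨by positivity, by linarith⟩

lemma mem_preScale {A : SInt} {m : ℕ+} {z : ℝ} :
    z ∈ (preScale A m).carrier ↔ (m : ℝ) * z ∈ A.carrier := Iff.rfl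



def covers (Ω : SInt) (S : Sieve Ω) : Prop :=
  ∀ p : ℝ, p ∈ Ω.carrier →
    ∃ (W : SInt) (i : W ⟶ Ω), IsInclusion i ∧ S.arrows i ∧ p ∈ W.carrier

def theJ : GrothendieckTopology SInt where
  sieves Ω := {S | covers Ω S}
  top_mem' Ω := fun p hp =>
    ⟨Ω, 𝟙 Ω, fun _ => rfl, trivial, hp⟩
  pullback_stable' := by
    intro Ω Ω'' S f hS p hp
    obtain ⟨m, hm⟩ := f.2
    have hfp : (m : ℝ) * p ∈ Ω.carrier := by
      have := (f.1 ⟨p, hp⟩).2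
      rwa [hm ⟨p, hp⟩] at this
    obtain ⟨W, i, hi, hiS, hmem⟩ := hS ((m : ℝ) * p) hfp
    refine ⟨inter Ω'' (preScale W m), inclHom _ _ (Set.inter_subset_left),
      isInclusion_inclHom _ _ _, ?_, hp, hmem⟩
    have hfac : inclHom (inter Ω'' (preScale W m)) Ω'' Set.inter_subset_left ≫ f =
        mkHom (inter Ω'' (preScale W m)) W m (fun z => z.2.2) ≫ i := by
      apply hom_ext
      intro z
      rw [comp_val, comp_val, hi]; erw [mkHom_val]
      have : ((inclHom (inter Ω'' (preScale W m)) Ω'' Set.inter_subset_left).1 z : ℝ)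
          = (z : ℝ) := rfl
      rw [hm, this]
    show S.arrows _
    rw [hfac]
    exact S.downward_closed hiS _
  transitive' := by
    intro Ω S hS R hR p hp
    obtain ⟨W, i, hi, hiS, hmem⟩ := hS p hp
    obtain ⟨W₂, i₂, hi₂, hi₂R, hmem₂⟩ := hR hiS p hmem
    refine ⟨W₂, i₂ ≫ i, ?_, hi₂R, hmem₂⟩
    intro z
    rw [comp_val, hi, hi₂]

lemma mem_theJ {Ω : SInt} {S : Sieve Ω} : S ∈ theJ.sieves Ω ↔ covers Ω S := Iff.rfl

lemma compat_key {Ω V : SInt} {S : Sieve Ω}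
    (x : Presieve.FamilyOfElements (yoneda.obj V) (S : Presieve Ω))
    (hx : x.Compatible)
    {Ω' W : SInt} (f : Ω' ⟶ Ω) (hf : S.arrows f) (m : ℕ+)
    (hm : ∀ y : Ω'.carrier, ((f.1 y : ℝ)) = (m : ℝ) * y)
    (i : W ⟶ Ω) (hi : IsInclusion i) (hiS : S.arrows i)
    (y : Ω'.carrier) (hy : (m : ℝ) * y ∈ W.carrier) :
    (((x f hf).1 y : ℝ)) = ((x i hiS).1 ⟨(m : ℝ) * y, hy⟩ : ℝ) := by
  set D := inter Ω' (preScale W m) with hD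
  have hsub : D.carrier ⊆ Ω'.carrier := Set.inter_subset_left
  set e : D ⟶ Ω' := inclHom D Ω' hsub with he
  set p : D ⟶ W := mkHom D W m (fun z => z.2.2) with hp
  have hcomm : e ≫ f = p ≫ i := by
    apply hom_ext; intro z
    rw [comp_val, comp_val, hm, hi]; erw [mkHom_val]
    rfl
  have h2 : e ≫ (x f hf) = p ≫ (x i hiS) := hx e p hf hiS hcomm
  have hz : (y : ℝ) ∈ D.carrier := ⟨y.2, hy⟩
  have h3 := congrArg (fun (g : D ⟶ V) => ((g.1 ⟨(y : ℝ), hz⟩ : ℝ))) h2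
  rw [comp_val, comp_val] at h3
  have hey : e.1 ⟨(y : ℝ), hz⟩ = y := Subtype.ext rfl
  have hpy : p.1 ⟨(y : ℝ), hz⟩ = ⟨(m : ℝ) * y, hy⟩ := Subtype.ext rfl
  rw [hey, hpy] at h3
  exact h3
end SIntProof

open SIntProof in
/-- The collection `J(Ω)` of sieves on `Ω` containing a family of inclusion
morphisms `{Ω_i ⊆ Ω}` with `∪ Ω_i = Ω` is a Grothendieck topology on `𝒞`, and it is
subcanonical: every representable presheaf `Hom(−, V)` is a `J`-sheaf. -/
theorem statement1 :
    ∃ J : GrothendieckTopology SInt,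
      (∀ (Ω : SInt) (S : Sieve Ω),
        S ∈ J.sieves Ω ↔
          ∃ (ι : Type) (D : ι → SInt) (incl : ∀ i : ι, D i ⟶ Ω),
            (∀ i, IsInclusion (incl i)) ∧ (∀ i, S.arrows (incl i)) ∧
            (⋃ i, (D i).carrier) = Ω.carrier) ∧
      (∀ V : SInt, Presieve.IsSheaf J (yoneda.obj V)) := by
  refine ⟨theJ, ?_, ?_⟩
  · intro Ω S
    constructor
    · intro hS
      choose W i hi hiS hmem using (hS : covers Ω S)
      refine ⟨Ω.carrier, fun p => W p.1 p.2, fun p => i p.1 p.2,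
        fun p => hi p.1 p.2, fun p => hiS p.1 p.2, ?_⟩
      apply subset_antisymm
      · exact Set.iUnion_subset fun p => subset_of_isInclusion (hi p.1 p.2)
      · intro z hz; exact Set.mem_iUnion.mpr ⟨⟨z, hz⟩, hmem z hz⟩
    · rintro ⟨ι, D, incl, h1, h2, h3⟩ pt hpt
      rw [← h3] at hpt
      obtain ⟨j, hj⟩ := Set.mem_iUnion.mp hpt
      exact ⟨D j, incl j, h1 j, h2 j, hj⟩
  · intro V Ω S hS x hx
    choose W i hi hiS hmem using (hS : covers Ω S)
    have hloc : ∀ p : Ω.carrier, ∃ nn : ℕ+,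
        ∀ z : (W p.1 p.2).carrier,
          (((x (i p.1 p.2) (hiS p.1 p.2)).1 z : ℝ)) = (nn : ℝ) * z :=
      fun p => (x (i p.1 p.2) (hiS p.1 p.2)).2
    choose N hN using hloc
    have wd : ∀ (p q : Ω.carrier), (q : ℝ) ∈ (W p.1 p.2).carrier →
        (N q : ℝ) * q = (N p : ℝ) * q := by
      intro p q hq
      have h1 : ∀ y : (W q.1 q.2).carrier, (((i q.1 q.2).1 y : ℝ)) = ((1 : ℕ+) : ℝ) * y := by
        intro y; rw [hi q.1 q.2 y]; norm_num
      have hy : ((1 : ℕ+) : ℝ) * (q : ℝ) ∈ (W p.1 p.2).carrier := by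
        rw [show ((1 : ℕ+) : ℝ) * (q : ℝ) = (q : ℝ) by norm_num]; exact hq
      have hck := compat_key x hx (i q.1 q.2) (hiS q.1 q.2) 1 h1
        (i p.1 p.2) (hi p.1 p.2) (hiS p.1 p.2) ⟨q.1, hmem q.1 q.2⟩ hy
      rw [hN q ⟨q.1, hmem q.1 q.2⟩, hN p ⟨((1 : ℕ+) : ℝ) * q, hy⟩] at hck
      simpa using hck
    have hglob : ∃ n : ℕ+, ∀ p : Ω.carrier, (N p : ℝ) * p = (n : ℝ) * p := by
      rcases Set.eq_empty_or_nonempty Ω.carrier with hemp | hne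
      · exact ⟨1, fun p => (Set.eq_empty_iff_forall_notMem.mp hemp p.1 p.2).elim⟩
      · obtain ⟨p0, hp0, hp0pos⟩ := posPoint Ω hne
        refine ⟨N ⟨p0, hp0⟩, ?_⟩
        set P0 : Ω.carrier := ⟨p0, hp0⟩ with hP0
        set u := ⋃ (p : Ω.carrier) (_ : N p = N P0),
          ((W p.1 p.2).carrier ∩ Set.Ioi 0) with hu_def
        set v := ⋃ (p : Ω.carrier) (_ : N p ≠ N P0),
          ((W p.1 p.2).carrier ∩ Set.Ioi 0) with hv_def
        have hu : IsOpen u := isOpen_iUnion fun p => isOpen_iUnion fun _ => posOpen _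
        have hv : IsOpen v := isOpen_iUnion fun p => isOpen_iUnion fun _ => posOpen _
        have hdisj : Disjoint u v := by
          rw [Set.disjoint_left]
          rintro z hzu hzv
          simp only [hu_def, hv_def, Set.mem_iUnion, Set.mem_inter_iff, Set.mem_Ioi] at hzu hzv
          obtain ⟨p, hpn, hzW, hzpos⟩ := hzu
          obtain ⟨q, hqn, hzW', _⟩ := hzv
          have hzΩ : z ∈ Ω.carrier := subset_of_isInclusion (hi p.1 p.2) hzW
          have e1 := wd p ⟨z, hzΩ⟩ hzW
          have e2 := wd q ⟨z, hzΩ⟩ hzW'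
          have e3 : (N p : ℝ) * z = (N q : ℝ) * z := by
            rw [← e1, ← e2]
          have e4 : (N p : ℝ) = (N q : ℝ) := mul_right_cancel₀ (ne_of_gt hzpos) e3
          have e5 : N p = N q := by exact_mod_cast e4
          exact hqn (e5 ▸ hpn)
        have hsub : Ω.carrier ∩ Set.Ioi 0 ⊆ u ∪ v := by
          rintro z ⟨hzΩ, hzpos⟩
          by_cases hc : N ⟨z, hzΩ⟩ = N P0
          · left
            simp only [hu_def, Set.mem_iUnion, Set.mem_inter_iff, Set.mem_Ioi]
            exact ⟨⟨z, hzΩ⟩, hc, hmem z hzΩ, hzpos⟩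
          · right
            simp only [hv_def, Set.mem_iUnion, Set.mem_inter_iff, Set.mem_Ioi]
            exact ⟨⟨z, hzΩ⟩, hc, hmem z hzΩ, hzpos⟩
        have hne' : (Ω.carrier ∩ Set.Ioi 0 ∩ u).Nonempty := by
          refine ⟨p0, ⟨hp0, hp0pos⟩, ?_⟩
          simp only [hu_def, Set.mem_iUnion, Set.mem_inter_iff, Set.mem_Ioi]
          exact ⟨P0, rfl, hmem p0 hp0, hp0pos⟩
        have hforall := (posPreconnected Ω).subset_left_of_subset_union hu hv hdisj hsub hne'
        intro p
        by_cases hpz : (p : ℝ) = 0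
        · rw [hpz, mul_zero, mul_zero]
        · have hppos : 0 < (p : ℝ) := lt_of_le_of_ne (nonneg Ω p p.2) (Ne.symm hpz)
          have hzu : (p : ℝ) ∈ u := hforall ⟨p.2, hppos⟩
          simp only [hu_def, Set.mem_iUnion, Set.mem_inter_iff, Set.mem_Ioi] at hzu
          obtain ⟨q, hqn, hWq, _⟩ := hzu
          rw [wd q p hWq, hqn]
    obtain ⟨n, hn⟩ := hglob
    have hvalmem : ∀ p : Ω.carrier, (n : ℝ) * p ∈ V.carrier := by
      intro p
      have h1 := hN p ⟨p.1, hmem p.1 p.2⟩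
      have h2 := ((x (i p.1 p.2) (hiS p.1 p.2)).1 ⟨p.1, hmem p.1 p.2⟩).2
      have h3 : ((⟨p.1, hmem p.1 p.2⟩ : (W p.1 p.2).carrier) : ℝ) = (p : ℝ) := rfl
      rw [h1, h3, hn p] at h2
      exact h2
    refine ⟨mkHom Ω V n hvalmem, ?_, ?_⟩
    · intro Ω' f hf
      show f ≫ mkHom Ω V n hvalmem = x f hf
      apply hom_ext
      intro y
      obtain ⟨m, hm⟩ := f.2
      have hfy : (m : ℝ) * (y : ℝ) ∈ (W ((f.1 y : ℝ)) (f.1 y).2).carrier := by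
        rw [← hm y]; exact hmem _ (f.1 y).2
      have hck := compat_key x hx f hf m hm (i (f.1 y : ℝ) (f.1 y).2)
        (hi _ _) (hiS _ _) y hfy
      rw [comp_val, hck, hN, mkHom_val]
      have hcoe : ((⟨(m : ℝ) * y, hfy⟩ : (W ((f.1 y : ℝ)) (f.1 y).2).carrier) : ℝ)
          = (m : ℝ) * y := rfl
      rw [hcoe]
      have h5 := hn (f.1 y)
      rw [hm y] at h5
      rw [hm y]
      exact h5.symm
    · intro t' ht'
      apply hom_ext
      intro p
      have h1 : (i p.1 p.2) ≫ t' = x (i p.1 p.2) (hiS p.1 p.2) := ht' (i p.1 p.2) (hiS p.1 p.2)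
      have h2 := congrArg (fun (g : W p.1 p.2 ⟶ V) => ((g.1 ⟨p.1, hmem p.1 p.2⟩ : ℝ))) h1
      simp only at h2
      rw [comp_val] at h2
      have hip : (i p.1 p.2).1 ⟨p.1, hmem p.1 p.2⟩ = p := Subtype.ext (hi p.1 p.2 _)
      rw [hip, hN] at h2
      rw [h2, mkHom_val]
      have h3 : ((⟨p.1, hmem p.1 p.2⟩ : (W p.1 p.2).carrier) : ℝ) = (p : ℝ) := rfl
      rw [h3]
      exact hn p
end

section
/- Fix a prime p. (a) Every group homomorphism φ : ℤ[1/p] → ℝ is given by φ(x) = λ·x with λ = φ(1); consequently, every subgroup H ⊆ ℝ that is isomorphic as an abstract group to ℤ[1/p] is of the form H = λ·ℤ[1/p] for some λ > 0. (b) For λ, λ' > 0 one has λ·ℤ[1/p] = λ'·ℤ[1/p] if and only if λ/λ' = p^k for some k ∈ ℤ. Hence λ ↦ λ·ℤ[1/p] induces a bijection from ℝ_{>0}/p^ℤ onto the set of subgroups of ℝ isomorphic to ℤ[1/p]. -/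
/-- The set `H_p = ℤ[1/p] = {a / p^n : a ∈ ℤ, n ∈ ℕ}` inside `ℝ`. -/
def HpSet (p : ℕ) : Set ℝ := {x : ℝ | ∃ (a : ℤ) (n : ℕ), x = (a : ℝ) / (p : ℝ) ^ n}

/-- `H_p = ℤ[1/p]` as an additive subgroup of `ℝ` (for `p` prime). -/
def Hp (p : ℕ) (hp : p.Prime) : AddSubgroup ℝ where
  carrier := HpSet p
  zero_mem' := ⟨0, 0, by simp⟩
  add_mem' := by
    rintro x y ⟨a, n, rfl⟩ ⟨b, m, rfl⟩
    refine ⟨a * (p : ℤ) ^ m + b * (p : ℤ) ^ n, n + m, ?_⟩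
    have hp0 : (p : ℝ) ≠ 0 := by exact_mod_cast hp.ne_zero
    have h1 : (p : ℝ) ^ n ≠ 0 := pow_ne_zero _ hp0
    have h2 : (p : ℝ) ^ m ≠ 0 := pow_ne_zero _ hp0
    rw [div_add_div _ _ h1 h2, div_eq_div_iff (mul_ne_zero h1 h2) (pow_ne_zero _ hp0)]
    push_cast
    ring
  neg_mem' := by
    rintro x ⟨a, n, rfl⟩
    exact ⟨-a, n, by push_cast; ring⟩

lemma one_mem_Hp (p : ℕ) (hp : p.Prime) : (1 : ℝ) ∈ Hp p hp :=
  ⟨1, 0, by norm_num⟩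


lemma part1 (p : ℕ) (hp : p.Prime) (φ : Hp p hp →+ ℝ) (x : Hp p hp) :
    φ x = φ ⟨1, one_mem_Hp p hp⟩ * (x : ℝ) := by
  obtain ⟨a, n, hx⟩ := x.2
  have hp0 : (p : ℝ) ≠ 0 := by exact_mod_cast hp.ne_zero
  have hpn : (p : ℝ) ^ n ≠ 0 := pow_ne_zero _ hp0
  have key : ((p : ℤ) ^ n) • x = a • (⟨1, one_mem_Hp p hp⟩ : Hp p hp) := by
    apply Subtype.ext
    push_cast
    rw [hx]
    field_simp
    rw [zsmul_eq_mul, zsmul_eq_mul]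
    push_cast
    field_simp
  have h2 := congrArg φ key
  rw [map_zsmul, map_zsmul, zsmul_eq_mul, zsmul_eq_mul] at h2
  push_cast at h2
  rw [hx]
  field_simp
  linear_combination h2

lemma zpow_mul_mem_HpSet (p : ℕ) (hp : p.Prime) (k : ℤ) {x : ℝ} (hx : x ∈ HpSet p) :
    (p : ℝ) ^ k * x ∈ HpSet p := by
  obtain ⟨a, n, rfl⟩ := hx
  have hp0 : (p : ℝ) ≠ 0 := by exact_mod_cast hp.ne_zero
  obtain ⟨m, rfl | rfl⟩ := k.eq_nat_or_neg
  · refine ⟨a * (p : ℤ) ^ m, n, ?_⟩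
    rw [zpow_natCast]
    push_cast
    field_simp
  · refine ⟨a, n + m, ?_⟩
    rw [zpow_neg, zpow_natCast]
    rw [pow_add]
    field_simp

lemma neg_mem_HpSet (p : ℕ) {x : ℝ} (hx : x ∈ HpSet p) : -x ∈ HpSet p := by
  obtain ⟨a, n, rfl⟩ := hx
  exact ⟨-a, n, by push_cast; ring⟩

lemma image_sub (p : ℕ) (hp : p.Prime) {lam lam' : ℝ} (k : ℤ)
    (h : lam = lam' * (p : ℝ) ^ k) :
    (fun t => lam * t) '' HpSet p ⊆ (fun t => lam' * t) '' HpSet p := by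
  rintro x ⟨t, ht, rfl⟩
  exact ⟨(p : ℝ) ^ k * t, zpow_mul_mem_HpSet p hp k ht, by rw [h]; ring⟩

-- part 3
lemma part3 (p : ℕ) (hp : p.Prime) (lam lam' : ℝ) (hl : 0 < lam) (hl' : 0 < lam') :
    ((fun t => lam * t) '' HpSet p = (fun t => lam' * t) '' HpSet p ↔
      ∃ k : ℤ, lam / lam' = (p : ℝ) ^ k) := by
  have hp0 : (p : ℝ) ≠ 0 := by exact_mod_cast hp.ne_zero
  constructor
  · intro h
    have h1 : lam ∈ (fun t => lam' * t) '' HpSet p := by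
      rw [← h]; exact ⟨1, ⟨1, 0, by norm_num⟩, by simp⟩
    have h2 : lam' ∈ (fun t => lam * t) '' HpSet p := by
      rw [h]; exact ⟨1, ⟨1, 0, by norm_num⟩, by simp⟩
    obtain ⟨t, ⟨a, n, rfl⟩, hA⟩ := h1
    obtain ⟨s, ⟨b, m, rfl⟩, hB⟩ := h2
    simp only at hA hB
    have hpn : (p : ℝ) ^ n ≠ 0 := pow_ne_zero _ hp0
    have hpm : (p : ℝ) ^ m ≠ 0 := pow_ne_zero _ hp0
    have hA' : lam' * (a : ℝ) = lam * (p : ℝ) ^ n := by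
      rw [← hA]; field_simp
    have hB' : lam * (b : ℝ) = lam' * (p : ℝ) ^ m := by
      rw [← hB]; field_simp
    have hcancel : (lam * lam') * ((a : ℝ) * b) = (lam * lam') * ((p : ℝ) ^ n * (p : ℝ) ^ m) := by
      linear_combination (lam * (b : ℝ)) * hA' + (lam * (p : ℝ) ^ n) * hB'
    have hab2 : (a : ℝ) * b = (p : ℝ) ^ n * (p : ℝ) ^ m :=
      mul_left_cancel₀ (by positivity) hcancel
    have habZ : a * b = (p : ℤ) ^ (n + m) := by
      have : ((a * b : ℤ) : ℝ) = (((p : ℤ) ^ (n + m) : ℤ) : ℝ) := by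
        push_cast; rw [pow_add]; exact hab2
      exact_mod_cast this
    have hadvd : a ∣ (p : ℤ) ^ (n + m) := ⟨b, habZ.symm⟩
    have hapos : 0 < a := by
      by_contra hneg
      push_neg at hneg
      have hle : lam' * (↑a / ↑p ^ n) ≤ 0 := by
        apply mul_nonpos_of_nonneg_of_nonpos hl'.le
        apply div_nonpos_of_nonpos_of_nonneg
        · exact_mod_cast hneg
        · positivity
      rw [hA] at hle
      linarith
    have hnat : a.natAbs ∣ p ^ (n + m) := by
      have h5 := Int.natAbs_dvd_natAbs.mpr hadvd
      rwa [Int.natAbs_pow, Int.natAbs_natCast] at h5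
    obtain ⟨i, hi, hia⟩ := (Nat.dvd_prime_pow hp).mp hnat
    have haR : (a : ℝ) = (p : ℝ) ^ i := by
      have h6 : (a.natAbs : ℤ) = a := Int.natAbs_of_nonneg hapos.le
      rw [← h6, hia]
      push_cast
      ring
    refine ⟨(i : ℤ) - n, ?_⟩
    have hpn' : (p : ℝ) ^ n ≠ 0 := hpn
    rw [zpow_sub₀ hp0, zpow_natCast, zpow_natCast, div_eq_div_iff hl'.ne' hpn']
    linear_combination -hA' + lam' * haR
  · rintro ⟨k, hk⟩
    have h1 : lam = lam' * (p : ℝ) ^ k := by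
      rw [← hk]; field_simp
    have h2 : lam' = lam * (p : ℝ) ^ (-k) := by
      rw [h1, zpow_neg]
      field_simp
    exact le_antisymm (image_sub p hp k h1) (image_sub p hp (-k) h2)

lemma image_neg_eq (p : ℕ) (lam : ℝ) :
    (fun t => lam * t) '' HpSet p = (fun t => -lam * t) '' HpSet p := by
  ext x
  constructor
  · rintro ⟨t, ht, rfl⟩
    exact ⟨-t, neg_mem_HpSet p ht, by ring⟩
  · rintro ⟨t, ht, rfl⟩
    exact ⟨-t, neg_mem_HpSet p ht, by ring⟩

lemma part2 (p : ℕ) (hp : p.Prime) (H : AddSubgroup ℝ) (h : Nonempty (H ≃+ Hp p hp)) :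
    ∃ lam : ℝ, 0 < lam ∧ (H : Set ℝ) = (fun t => lam * t) '' HpSet p := by
  obtain ⟨e⟩ := h
  set f : Hp p hp →+ ℝ := H.subtype.comp e.symm.toAddMonoidHom with hf
  have hinj : Function.Injective f :=
    Subtype.coe_injective.comp e.symm.injective
  set lam0 : ℝ := f ⟨1, one_mem_Hp p hp⟩ with hlam0
  have hne : lam0 ≠ 0 := by
    intro h0
    have : (⟨1, one_mem_Hp p hp⟩ : Hp p hp) = 0 := hinj (by rw [← hlam0, h0, map_zero])
    have h1 : (1 : ℝ) = 0 := congrArg Subtype.val this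
    norm_num at h1
  have hHeq : (H : Set ℝ) = (fun t => lam0 * t) '' HpSet p := by
    ext x
    constructor
    · intro hx
      refine ⟨(e ⟨x, hx⟩ : ℝ), (e ⟨x, hx⟩).2, ?_⟩
      have := part1 p hp f (e ⟨x, hx⟩)
      simp only [← hlam0] at this
      show lam0 * ((e ⟨x, hx⟩ : Hp p hp) : ℝ) = x
      rw [← this]
      simp [hf]
    · rintro ⟨t, ht, rfl⟩
      have := part1 p hp f ⟨t, ht⟩
      simp only [← hlam0] at this
      show lam0 * t ∈ (H : Set ℝ)
      rw [← this]
      simp only [hf, AddMonoidHom.coe_comp, Function.comp_apply, AddSubgroup.coe_subtype]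
      exact (e.symm ⟨t, ht⟩).2
  rcases lt_or_gt_of_ne hne with hneg | hpos
  · exact ⟨-lam0, by linarith, by rw [hHeq, image_neg_eq]⟩
  · exact ⟨lam0, hpos, hHeq⟩

lemma part4 (p : ℕ) (hp : p.Prime) (lam : ℝ) (hl : 0 < lam) :
    ∃ H : AddSubgroup ℝ,
      (H : Set ℝ) = (fun t => lam * t) '' HpSet p ∧ Nonempty (H ≃+ Hp p hp) := by
  refine ⟨(Hp p hp).map (AddMonoidHom.mulLeft lam), rfl, ?_⟩
  have hinj : Function.Injective (AddMonoidHom.mulLeft lam : ℝ →+ ℝ) := by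
    intro x y hxy
    exact mul_left_cancel₀ hl.ne' hxy
  exact ⟨(AddSubgroup.equivMapOfInjective (Hp p hp) _ hinj).symm⟩

/-- (a) every additive group homomorphism `φ : ℤ[1/p] → ℝ` is multiplication by
`λ = φ(1)`, and every subgroup of `ℝ` abstractly isomorphic to `ℤ[1/p]` is of the form
`λ · ℤ[1/p]` with `λ > 0`; (b) `λ · ℤ[1/p] = λ' · ℤ[1/p]` iff `λ/λ'` is an integral power of `p`;
moreover every `λ · ℤ[1/p]` (`λ > 0`) is a subgroup of `ℝ` isomorphic to `ℤ[1/p]`, so that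
`λ ↦ λ · ℤ[1/p]` induces a bijection of `ℝ_{>0}/p^ℤ` with the set of such subgroups. -/
theorem statement3 (p : ℕ) (hp : p.Prime) :
    (∀ φ : Hp p hp →+ ℝ, ∀ x : Hp p hp,
        φ x = φ ⟨1, one_mem_Hp p hp⟩ * (x : ℝ)) ∧
    (∀ H : AddSubgroup ℝ, Nonempty (H ≃+ Hp p hp) →
        ∃ lam : ℝ, 0 < lam ∧ (H : Set ℝ) = (fun t => lam * t) '' HpSet p) ∧
    (∀ lam lam' : ℝ, 0 < lam → 0 < lam' →
        ((fun t => lam * t) '' HpSet p = (fun t => lam' * t) '' HpSet p ↔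
          ∃ k : ℤ, lam / lam' = (p : ℝ) ^ k)) ∧
    (∀ lam : ℝ, 0 < lam → ∃ H : AddSubgroup ℝ,
        (H : Set ℝ) = (fun t => lam * t) '' HpSet p ∧ Nonempty (H ≃+ Hp p hp)) := by
  exact ⟨part1 p hp, part2 p hp, part3 p hp, part4 p hp⟩
end

section
/- Fix a prime p. Let f : (0,∞) → ℝ be continuous with f(pλ) = f(λ) for all λ > 0, and let 0 < λ_0 < λ_1 < … < λ_{n−1} < λ_n = pλ_0 be such that f is affine with slope h_j ∈ H_p on the interval [λ_{j−1}, λ_j] for each j = 1, …, n. Then the total order of f on a fundamental domain vanishes: Σ_{j=1}^{n−1} λ_j·(h_{j+1} − h_j) + λ_0·(h_1 − p·h_n) = 0. -/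
/-- For a continuous `p`-periodic (multiplicatively) function which is affine
with slope `h_j ∈ H_p` on each interval `[λ_{j-1}, λ_j]` of a subdivision
`λ_0 < λ_1 < … < λ_n = pλ_0`, the total order on a fundamental domain vanishes:
`Σ_{j=1}^{n−1} λ_j (h_{j+1} − h_j) + λ_0 (h_1 − p h_n) = 0`. -/
theorem statement4 (p : ℕ) (hp : p.Prime)
    (f : ℝ → ℝ) (hcont : ContinuousOn f (Set.Ioi 0))
    (hper : ∀ lam : ℝ, 0 < lam → f (p * lam) = f lam)
    (n : ℕ) (hn : 1 ≤ n) (lam h : ℕ → ℝ)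
    (hlam0 : 0 < lam 0)
    (hmono : ∀ j, j < n → lam j < lam (j + 1))
    (hlamn : lam n = p * lam 0)
    (hHp : ∀ j, 1 ≤ j → j ≤ n → h j ∈ HpSet p)
    (haff : ∀ j, 1 ≤ j → j ≤ n →
      ∃ c : ℝ, ∀ x ∈ Set.Icc (lam (j - 1)) (lam j), f x = h j * x + c) :
    ∑ j ∈ Finset.Ico 1 n, lam j * (h (j + 1) - h j) + lam 0 * (h 1 - p * h n) = 0 := by
  classical
  -- choose the constants c j
  set c : ℕ → ℝ := fun j =>
    if hj : 1 ≤ j ∧ j ≤ n then (haff j hj.1 hj.2).choose else 0 with hc_def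
  have hc : ∀ j, 1 ≤ j → j ≤ n → ∀ x ∈ Set.Icc (lam (j - 1)) (lam j),
      f x = h j * x + c j := by
    intro j h1 h2 x hx
    have : c j = (haff j h1 h2).choose := by simp [hc_def, h1, h2]
    rw [this]
    exact (haff j h1 h2).choose_spec x hx
  -- lam (j-1) ≤ lam j
  have hle : ∀ j, 1 ≤ j → j ≤ n → lam (j - 1) ≤ lam j := by
    intro j h1 h2
    have hlt : j - 1 < n := lt_of_lt_of_le (Nat.pred_lt (Nat.one_le_iff_ne_zero.mp h1)) h2
    have := hmono (j - 1) hlt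
    rw [Nat.sub_add_cancel h1] at this; exact le_of_lt this
  -- value at right endpoint
  have hA : ∀ j, 1 ≤ j → j ≤ n → f (lam j) = h j * lam j + c j := by
    intro j h1 h2
    exact hc j h1 h2 (lam j) ⟨hle j h1 h2, le_refl _⟩
  -- value at left endpoint
  have hB : ∀ j, 1 ≤ j → j ≤ n → f (lam (j - 1)) = h j * lam (j - 1) + c j := by
    intro j h1 h2
    exact hc j h1 h2 (lam (j - 1)) ⟨le_refl _, hle j h1 h2⟩
  -- key step: term j equals c j - c (j+1)
  have hstep : ∀ j, 1 ≤ j → j < n → lam j * (h (j + 1) - h j) = c j - c (j + 1) := by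
    intro j h1 h2
    have e1 : f (lam j) = h j * lam j + c j := hA j h1 (le_of_lt h2)
    have e2 : f (lam j) = h (j + 1) * lam j + c (j + 1) := by
      have := hB (j + 1) (Nat.le_add_left 1 j) h2
      simpa using this
    have := e1.symm.trans e2
    linarith
  -- telescoping
  have htel : ∀ m, 1 ≤ m → m ≤ n →
      ∑ j ∈ Finset.Ico 1 m, lam j * (h (j + 1) - h j) = c 1 - c m := by
    intro m hm
    induction m, hm using Nat.le_induction with
    | base => intro _; simp
    | succ m hm ih =>
      intro hmn
      rw [Finset.sum_Ico_succ_top hm, ih (le_of_lt hmn),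
        hstep m hm hmn]
      ring
  have hsum := htel n hn le_rfl
  -- periodicity: f (lam n) = f (lam 0)
  have hper0 : f (lam n) = f (lam 0) := by
    rw [hlamn]; exact hper (lam 0) hlam0
  have eA : f (lam n) = h n * lam n + c n := hA n hn le_rfl
  have eB : f (lam 0) = h 1 * lam 0 + c 1 := by
    have := hB 1 le_rfl hn
    simpa using this
  have key : h n * lam n + c n = h 1 * lam 0 + c 1 := by
    rw [← eA, ← eB, hper0]
  have hrw : lam 0 * (h 1 - ↑p * h n) = h 1 * lam 0 - h n * (↑p * lam 0) := by ring
  rw [hsum, hrw, ← hlamn]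
  linarith
end

section
/- Fix a prime p. (i) If λ, λ' > 0 satisfy λ·H_p = λ'·H_p as subgroups of ℝ, then for every h ∈ λ·H_p one has χ(h/λ) = χ(h/λ') in ℤ/(p−1)ℤ. (ii) Let f : (0,∞) → ℝ be continuous with f(pλ) = f(λ) for all λ > 0, and let 0 < λ_0 < λ_1 < … < λ_{n−1} < λ_n = pλ_0 be such that f is affine with slope h_j ∈ H_p on [λ_{j−1}, λ_j] for j = 1, …, n. Then Σ_{j=1}^{n−1} χ(h_{j+1} − h_j) + χ(h_1 − p·h_n) = 0 in ℤ/(p−1)ℤ. -/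
/-- Here `χ : H_p → ℤ/(p−1)ℤ` is any (the) map sending `a/p^n` to `a mod (p−1)`.
(i) If `λ·H_p = λ'·H_p` (with `λ, λ' > 0`) then `χ(h/λ) = χ(h/λ')` for every `h ∈ λ·H_p`.
(ii) For a continuous function with `f(pλ) = f(λ)`, affine with slopes `h_j ∈ H_p` on the pieces
of a subdivision `λ_0 < … < λ_n = pλ_0`, one has
`Σ_{j=1}^{n−1} χ(h_{j+1} − h_j) + χ(h_1 − p h_n) = 0` in `ℤ/(p−1)ℤ`. -/
theorem statement5 (p : ℕ) (hp : p.Prime)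
    (χ : ℝ → ZMod (p - 1))
    (hχ : ∀ (a : ℤ) (n : ℕ), χ ((a : ℝ) / (p : ℝ) ^ n) = (a : ZMod (p - 1))) :
    (∀ lam lam' : ℝ, 0 < lam → 0 < lam' →
      (fun t => lam * t) '' HpSet p = (fun t => lam' * t) '' HpSet p →
      ∀ hval ∈ (fun t => lam * t) '' HpSet p, χ (hval / lam) = χ (hval / lam')) ∧
    (∀ f : ℝ → ℝ, ContinuousOn f (Set.Ioi 0) →
      (∀ lam : ℝ, 0 < lam → f (p * lam) = f lam) →
      ∀ n : ℕ, 1 ≤ n → ∀ lam h : ℕ → ℝ, 0 < lam 0 →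
      (∀ j, j < n → lam j < lam (j + 1)) → lam n = p * lam 0 →
      (∀ j, 1 ≤ j → j ≤ n → h j ∈ HpSet p) →
      (∀ j, 1 ≤ j → j ≤ n →
        ∃ c : ℝ, ∀ x ∈ Set.Icc (lam (j - 1)) (lam j), f x = h j * x + c) →
      ∑ j ∈ Finset.Ico 1 n, χ (h (j + 1) - h j) + χ (h 1 - p * h n) = 0) := by
  have hp1 : 1 < p := hp.one_lt
  have hpR : (0:ℝ) < (p:ℝ) := by exact_mod_cast Nat.lt_of_lt_of_le Nat.zero_lt_one hp1.le
  have hpne : (p:ℝ) ≠ 0 := ne_of_gt hpR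
  have hpc : ((p:ℕ) : ZMod (p-1)) = 1 := by
    have h0 : ((p:ℕ) : ZMod (p-1)) = (((p-1)+1 : ℕ) : ZMod (p-1)) :=
      congrArg _ (by omega)
    rw [h0]
    push_cast [ZMod.natCast_self]
    ring
  have chi_sub : ∀ x y : ℝ, x ∈ HpSet p → y ∈ HpSet p → χ (x - y) = χ x - χ y := by
    rintro x y ⟨a, n, rfl⟩ ⟨b, m, rfl⟩
    have hx : (a:ℝ)/(p:ℝ)^n - (b:ℝ)/(p:ℝ)^m = ((a * p^m - b * p^n : ℤ):ℝ) / (p:ℝ)^(n+m) := by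
      push_cast
      field_simp
      ring
    rw [hx, hχ, hχ, hχ]
    push_cast [hpc]
    ring
  have chi_pmul : ∀ x : ℝ, x ∈ HpSet p → χ ((p:ℝ) * x) = χ x := by
    rintro x ⟨a, n, rfl⟩
    have hx : (p:ℝ) * ((a:ℝ)/(p:ℝ)^n) = ((p * a : ℤ):ℝ) / (p:ℝ)^n := by
      push_cast; field_simp
    rw [hx, hχ, hχ]
    push_cast [hpc]
    ring
  constructor
  · intro lam lam' hl hl' heq hval hmem
    have hlne : lam ≠ 0 := ne_of_gt hl
    have hl'ne : lam' ≠ 0 := ne_of_gt hl'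
    obtain ⟨t, ⟨c, k, rfl⟩, rfl⟩ := hmem
    -- lam ∈ lam' * H_p
    have h1 : lam ∈ (fun t => lam' * t) '' HpSet p := by
      rw [← heq]
      exact ⟨1, ⟨1, 0, by norm_num⟩, by simp⟩
    have h2 : lam' ∈ (fun t => lam * t) '' HpSet p := by
      rw [heq]
      exact ⟨1, ⟨1, 0, by norm_num⟩, by simp⟩
    obtain ⟨u, ⟨a, n0, rfl⟩, hu⟩ := h1
    obtain ⟨v, ⟨b, m0, rfl⟩, hv⟩ := h2
    simp only at hu hv
    -- a * b = p ^ (n0 + m0)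
    have hab : a * b = (p:ℤ) ^ (n0 + m0) := by
      have : lam * ((a:ℝ) * (b:ℝ)) = lam * ((p:ℝ)^(n0+m0)) := by
        have e1 : lam' * ((a:ℝ)/(p:ℝ)^n0) = lam := hu
        have e2 : lam * ((b:ℝ)/(p:ℝ)^m0) = lam' := hv
        rw [← e2] at e1
        field_simp at e1
        rw [pow_add]
        rw [mul_comm (a:ℝ) (b:ℝ), e1]; ring
      have := mul_left_cancel₀ hlne this
      exact_mod_cast this
    have hapos : 0 < a := by
      by_contra hcon
      push_neg at hcon
      have haR : (a:ℝ) ≤ 0 := by exact_mod_cast hcon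
      have : lam' * ((a:ℝ)/(p:ℝ)^n0) ≤ 0 := by
        apply mul_nonpos_of_nonneg_of_nonpos (le_of_lt hl')
        exact div_nonpos_of_nonpos_of_nonneg haR (by positivity)
      rw [hu] at this
      linarith
    -- a = p ^ s
    have hdvd : a.natAbs ∣ p ^ (n0 + m0) := by
      have : a ∣ (p:ℤ) ^ (n0 + m0) := ⟨b, hab.symm⟩
      have := Int.natAbs_dvd_natAbs.mpr this
      rwa [Int.natAbs_pow, Int.natAbs_natCast] at this
    obtain ⟨s, _, hs⟩ := (Nat.dvd_prime_pow hp).mp hdvd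
    have haeq : (a:ℝ) = (p:ℝ) ^ s := by
      have : a = (p:ℤ) ^ s := by
        rw [← Int.natAbs_of_nonneg hapos.le, hs]; push_cast; ring
      rw [this]; push_cast; ring
    -- hval / lam = c / p^k,  hval / lam' = (c * p^s) / p^(k+n0)
    have e1 : lam * ((c:ℝ)/(p:ℝ)^k) / lam = (c:ℝ)/(p:ℝ)^k := by
      field_simp
    have e2 : lam * ((c:ℝ)/(p:ℝ)^k) / lam' = ((c * p^s : ℤ):ℝ)/(p:ℝ)^(k + n0) := by
      have hlam : lam = lam' * ((p:ℝ)^s/(p:ℝ)^n0) := by rw [← hu, haeq]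
      rw [hlam]
      push_cast
      rw [pow_add]
      field_simp
    rw [e1, e2, hχ, hχ]
    push_cast [hpc]
    simp
  · intro f hf hfp n hn lam h hlam0 hmono hlamn hmem haff
    have step : ∀ j ∈ Finset.Ico 1 n, χ (h (j+1) - h j) = χ (h (j+1)) - χ (h j) := by
      intro j hj
      rw [Finset.mem_Ico] at hj
      exact chi_sub _ _ (hmem _ (by omega) (by omega)) (hmem _ hj.1 (by omega))
    rw [Finset.sum_congr rfl step]
    have tele : ∀ m : ℕ, ∑ j ∈ Finset.Ico 1 (m+1), (χ (h (j+1)) - χ (h j))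
        = χ (h (m+1)) - χ (h 1) := by
      intro m
      induction m with
      | zero => simp
      | succ m ih =>
        rw [Finset.sum_Ico_succ_top (by omega), ih]
        ring
    have hn' : n = (n - 1) + 1 := by omega
    rw [hn', tele (n-1), ← hn']
    have hpn : (p:ℝ) * h n ∈ HpSet p := by
      obtain ⟨a, m, ha⟩ := hmem n hn le_rfl
      exact ⟨p * a, m, by rw [ha]; push_cast; ring⟩
    rw [chi_sub _ _ (hmem 1 le_rfl hn) hpn, chi_pmul _ (hmem n hn le_rfl)]
    ring
end

section
/- Fix a prime p. Let 0 < λ_0 < λ_1 < … < λ_{n−1} < pλ_0 and a_0, …, a_{n−1} ∈ H_p. Then there exists f ∈ K(C_p) with Ord_{λ_j}(f) = a_j·λ_j for each j and Ord_λ(f) = 0 for every λ ∈ [λ_0, pλ_0) not equal to any λ_j, if and only if Σ_j a_j·λ_j = 0 and Σ_j χ(a_j) = 0 in ℤ/(p−1)ℤ. Moreover, for every d ∈ ℝ and every m ∈ ℤ/(p−1)ℤ there exist such data (λ_j), (a_j) with Σ_j a_j·λ_j = d and Σ_j χ(a_j) = m. (Equivalently, the pair (deg, χ) induces a group isomorphism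 Div(C_p)/P ≅ ℝ × ℤ/(p−1)ℤ, where P is the subgroup of principal divisors.) -/
/-- `f` is piecewise affine on `(0,∞)` with all slopes in `S`. -/
def PiecewiseAffineWith (S : Set ℝ) (f : ℝ → ℝ) : Prop :=
  ∀ u v : ℝ, 0 < u → u < v →
    ∃ (n : ℕ) (t : ℕ → ℝ), 0 < n ∧ t 0 = u ∧ t n = v ∧ (∀ i < n, t i < t (i + 1)) ∧
      ∀ i < n, ∃ s ∈ S, ∃ c : ℝ, ∀ x ∈ Set.Icc (t i) (t (i + 1)), f x = s * x + c

/-- `K(C_p)`: continuous piecewise affine functions on `(0,∞)` with slopes in `H_p` satisfying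
`f(pλ) = f(λ)`. -/
def KCp (p : ℕ) (f : ℝ → ℝ) : Prop :=
  ContinuousOn f (Set.Ioi 0) ∧ PiecewiseAffineWith (HpSet p) f ∧
    ∀ lam : ℝ, 0 < lam → f (p * lam) = f lam

/-- `f` has right-hand slope `s` at `x`. -/
def HasRightSlope (f : ℝ → ℝ) (x s : ℝ) : Prop :=
  ∃ δ : ℝ, 0 < δ ∧ ∀ y ∈ Set.Ico x (x + δ), f y = f x + s * (y - x)

/-- `f` has left-hand slope `s` at `x`. -/
def HasLeftSlope (f : ℝ → ℝ) (x s : ℝ) : Prop :=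
  ∃ δ : ℝ, 0 < δ ∧ ∀ y ∈ Set.Ioc (x - δ) x, f y = f x + s * (y - x)

/-- The order of `f` at `λ` is `d = λ (f'₊(λ) − f'₋(λ))`. -/
def HasOrdAt (f : ℝ → ℝ) (lam d : ℝ) : Prop :=
  ∃ sp sm : ℝ, HasRightSlope f lam sp ∧ HasLeftSlope f lam sm ∧ d = lam * (sp - sm)

namespace S6

/-! ### Basic facts about `HpSet` -/

lemma hp_pos {p : ℕ} (hp : p.Prime) : (0:ℝ) < p := by
  exact_mod_cast hp.pos

lemma hp_one_lt {p : ℕ} (hp : p.Prime) : (1:ℝ) < p := by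
  exact_mod_cast hp.one_lt

lemma Hp_int {p : ℕ} (a : ℤ) : ((a : ℝ)) ∈ HpSet p := ⟨a, 0, by simp⟩

lemma Hp_zero {p : ℕ} : (0:ℝ) ∈ HpSet p := by simpa using Hp_int (p := p) 0

lemma Hp_add {p : ℕ} (hp : p.Prime) {x y : ℝ} (hx : x ∈ HpSet p) (hy : y ∈ HpSet p) :
    x + y ∈ HpSet p := by
  obtain ⟨a, n, rfl⟩ := hx
  obtain ⟨b, m, rfl⟩ := hy
  refine ⟨a * p ^ m + b * p ^ n, n + m, ?_⟩
  have h0 : (p:ℝ) ≠ 0 := ne_of_gt (hp_pos hp)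
  have h1 : ((a * p ^ m + b * p ^ n : ℤ) : ℝ) = a * p ^ m + b * p ^ n := by push_cast; ring
  rw [h1, pow_add]
  field_simp

lemma Hp_neg {p : ℕ} {x : ℝ} (hx : x ∈ HpSet p) : -x ∈ HpSet p := by
  obtain ⟨a, n, rfl⟩ := hx
  exact ⟨-a, n, by push_cast; ring⟩

lemma Hp_sub {p : ℕ} (hp : p.Prime) {x y : ℝ} (hx : x ∈ HpSet p) (hy : y ∈ HpSet p) :
    x - y ∈ HpSet p := by
  simpa [sub_eq_add_neg] using Hp_add hp hx (Hp_neg hy)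

lemma Hp_mulp {p : ℕ} (hp : p.Prime) {x : ℝ} (hx : x ∈ HpSet p) : (p:ℝ) * x ∈ HpSet p := by
  obtain ⟨a, n, rfl⟩ := hx
  have h0 : (p:ℝ) ≠ 0 := ne_of_gt (hp_pos hp)
  refine ⟨a * p, n, ?_⟩
  have h1 : ((a * p : ℤ) : ℝ) = a * p := by push_cast; ring
  rw [h1]
  ring

lemma Hp_divp {p : ℕ} (hp : p.Prime) {x : ℝ} (hx : x ∈ HpSet p) : x / (p:ℝ) ∈ HpSet p := by
  obtain ⟨a, n, rfl⟩ := hx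
  exact ⟨a, n + 1, by rw [pow_succ]; rw [div_div]⟩

lemma Hp_sum {p : ℕ} (hp : p.Prime) {n : ℕ} {a : ℕ → ℝ} (ha : ∀ j, j < n → a j ∈ HpSet p) :
    (∑ j ∈ Finset.range n, a j) ∈ HpSet p := by
  induction n with
  | zero => simpa using Hp_zero
  | succ k ih =>
      rw [Finset.sum_range_succ]
      exact Hp_add hp (ih fun j hj => ha j (hj.trans k.lt_succ_self))
        (ha k k.lt_succ_self)

end S6

namespace S6

section Chi

variable {p : ℕ} (hp : p.Prime) {χ : ℝ → ZMod (p - 1)}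
  (hχ : ∀ (a : ℤ) (m : ℕ), χ ((a : ℝ) / (p : ℝ) ^ m) = (a : ZMod (p - 1)))
include hp hχ

lemma pcast : ((p:ℕ) : ZMod (p-1)) = 1 := by
  have h : p = (p-1) + 1 := (Nat.succ_pred_eq_of_pos hp.pos).symm
  have h2 : ((p:ℕ) : ZMod (p-1)) = ((p-1+1 : ℕ) : ZMod (p-1)) := congrArg _ h
  rw [h2, Nat.cast_add, Nat.cast_one, ZMod.natCast_self, zero_add]

lemma chi_zero : χ 0 = 0 := by
  have := hχ 0 0
  simpa using this

lemma chi_neg {x : ℝ} (hx : x ∈ HpSet p) : χ (-x) = -χ x := by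
  obtain ⟨a, n, rfl⟩ := hx
  have h1 : -((a:ℝ) / (p:ℝ) ^ n) = ((-a : ℤ) : ℝ) / (p:ℝ) ^ n := by push_cast; ring
  rw [h1, hχ, hχ]
  push_cast; ring

lemma chi_add {x y : ℝ} (hx : x ∈ HpSet p) (hy : y ∈ HpSet p) :
    χ (x + y) = χ x + χ y := by
  obtain ⟨a, n, rfl⟩ := hx
  obtain ⟨b, m, rfl⟩ := hy
  have h0 : (p:ℝ) ≠ 0 := ne_of_gt (hp_pos hp)
  have h1 : (a:ℝ) / (p:ℝ) ^ n + (b:ℝ) / (p:ℝ) ^ m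
      = ((a * p ^ m + b * p ^ n : ℤ) : ℝ) / (p:ℝ) ^ (n + m) := by
    have h2 : ((a * p ^ m + b * p ^ n : ℤ) : ℝ) = a * p ^ m + b * p ^ n := by push_cast; ring
    rw [h2, pow_add]
    field_simp
  rw [h1, hχ, hχ, hχ]
  push_cast
  rw [pcast hp hχ]
  simp

lemma chi_sub {x y : ℝ} (hx : x ∈ HpSet p) (hy : y ∈ HpSet p) :
    χ (x - y) = χ x - χ y := by
  rw [sub_eq_add_neg, chi_add hp hχ hx (Hp_neg hy), chi_neg hp hχ hy]
  ring

lemma chi_mulp {x : ℝ} (hx : x ∈ HpSet p) : χ ((p:ℝ) * x) = χ x := by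
  obtain ⟨a, n, rfl⟩ := hx
  have h1 : (p:ℝ) * ((a:ℝ) / (p:ℝ) ^ n) = ((a * p : ℤ) : ℝ) / (p:ℝ) ^ n := by push_cast; ring
  rw [h1, hχ, hχ]
  push_cast
  rw [pcast hp hχ]
  ring

lemma chi_sum {n : ℕ} {a : ℕ → ℝ} (ha : ∀ j, j < n → a j ∈ HpSet p) :
    χ (∑ j ∈ Finset.range n, a j) = ∑ j ∈ Finset.range n, χ (a j) := by
  induction n with
  | zero => simpa using chi_zero hp hχ
  | succ k ih =>
      rw [Finset.sum_range_succ, Finset.sum_range_succ,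
        chi_add hp hχ (Hp_sum hp fun j hj => ha j (hj.trans k.lt_succ_self)) (ha k k.lt_succ_self),
        ih fun j hj => ha j (hj.trans k.lt_succ_self)]

end Chi

end S6

namespace S6

/-! ### Slopes -/

lemma right_unique {f : ℝ → ℝ} {x s s' : ℝ} (h : HasRightSlope f x s)
    (h' : HasRightSlope f x s') : s = s' := by
  obtain ⟨δ, hδ, h⟩ := h
  obtain ⟨δ', hδ', h'⟩ := h'
  set y := x + min δ δ' / 2 with hy
  have hmin : 0 < min δ δ' := lt_min hδ hδ'
  have hyy : y ∈ Set.Ico x (x + δ) := by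
    constructor
    · simp [hy]; linarith
    · simp only [hy]
      have : min δ δ' ≤ δ := min_le_left _ _
      linarith
  have hyy' : y ∈ Set.Ico x (x + δ') := by
    constructor
    · simp [hy]; linarith
    · simp only [hy]
      have : min δ δ' ≤ δ' := min_le_right _ _
      linarith
  have := (h y hyy).symm.trans (h' y hyy')
  have hne : y - x ≠ 0 := by simp [hy]; linarith
  have : s * (y - x) = s' * (y - x) := by linarith
  exact mul_right_cancel₀ hne this

lemma left_unique {f : ℝ → ℝ} {x s s' : ℝ} (h : HasLeftSlope f x s)
    (h' : HasLeftSlope f x s') : s = s' := by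
  obtain ⟨δ, hδ, h⟩ := h
  obtain ⟨δ', hδ', h'⟩ := h'
  set y := x - min δ δ' / 2 with hy
  have hmin : 0 < min δ δ' := lt_min hδ hδ'
  have hyy : y ∈ Set.Ioc (x - δ) x := by
    constructor
    · simp only [hy]
      have : min δ δ' ≤ δ := min_le_left _ _
      linarith
    · simp [hy]; linarith
  have hyy' : y ∈ Set.Ioc (x - δ') x := by
    constructor
    · simp only [hy]
      have : min δ δ' ≤ δ' := min_le_right _ _
      linarith
    · simp [hy]; linarith
  have := (h y hyy).symm.trans (h' y hyy')
  have hne : y - x ≠ 0 := by simp [hy]; linarith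
  have : s * (y - x) = s' * (y - x) := by linarith
  exact mul_right_cancel₀ hne this

open Classical in
noncomputable def jmp (f : ℝ → ℝ) (x : ℝ) : ℝ :=
  (if h : ∃ s, HasRightSlope f x s then h.choose else 0)
    - (if h : ∃ s, HasLeftSlope f x s then h.choose else 0)

lemma jmp_eq {f : ℝ → ℝ} {x sp sm : ℝ} (hp : HasRightSlope f x sp)
    (hm : HasLeftSlope f x sm) : jmp f x = sp - sm := by
  unfold jmp
  classical
  have h1 : ∃ s, HasRightSlope f x s := ⟨sp, hp⟩
  have h2 : ∃ s, HasLeftSlope f x s := ⟨sm, hm⟩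
  rw [dif_pos h1, dif_pos h2, right_unique h1.choose_spec hp, left_unique h2.choose_spec hm]

lemma ord_jmp {f : ℝ → ℝ} {x d : ℝ} (h : HasOrdAt f x d) : d = x * jmp f x := by
  obtain ⟨sp, sm, hsp, hsm, hd⟩ := h
  rw [jmp_eq hsp hsm, hd]

lemma jmp_zero_of_ord_zero {f : ℝ → ℝ} {x : ℝ} (hx : 0 < x) (h : HasOrdAt f x 0) :
    jmp f x = 0 := by
  have := ord_jmp h
  have hx' : x ≠ 0 := ne_of_gt hx
  field_simp at this
  exact (mul_eq_zero.1 this.symm).resolve_left hx'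

/-! ### Sequence combinatorics -/

lemma seq_strict_mono {w : ℕ → ℝ} {N : ℕ} (h : ∀ i, i < N → w i < w (i+1)) :
    ∀ i j, i < j → j ≤ N → w i < w j := by
  intro i j hij hjN
  induction j with
  | zero => omega
  | succ k ih =>
      rcases Nat.lt_or_ge i k with hik | hik
      · exact (ih hik (by omega)).trans (h k (by omega))
      · have : i = k := by omega
        subst this
        exact h i (by omega)

lemma seq_mono {w : ℕ → ℝ} {N : ℕ} (h : ∀ i, i < N → w i < w (i+1)) :
    ∀ i j, i ≤ j → j ≤ N → w i ≤ w j := by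
  intro i j hij hjN
  rcases eq_or_lt_of_le hij with rfl | hij
  · exact le_refl _
  · exact le_of_lt (seq_strict_mono h i j hij hjN)

lemma find_Ico {w : ℕ → ℝ} {N : ℕ} (hN : 0 < N) (h : ∀ i, i < N → w i < w (i+1))
    {z : ℝ} (h0 : w 0 ≤ z) (h1 : z < w N) : ∃ i, i < N ∧ w i ≤ z ∧ z < w (i+1) := by
  induction N with
  | zero => omega
  | succ k ih =>
      rcases Nat.eq_zero_or_pos k with rfl | hk
      · exact ⟨0, by omega, h0, h1⟩
      · rcases lt_or_ge z (w k) with hz | hz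
        · obtain ⟨i, hi, hwi, hwi'⟩ := ih hk (fun i hi => h i (by omega)) hz
          exact ⟨i, by omega, hwi, hwi'⟩
        · exact ⟨k, by omega, hz, h1⟩

lemma find_Ioo {w : ℕ → ℝ} {N : ℕ} (hN : 0 < N) (h : ∀ i, i < N → w i < w (i+1))
    {z : ℝ} (h0 : w 0 ≤ z) (h1 : z < w N) (hne : ∀ i, i ≤ N → z ≠ w i) :
    ∃ i, i < N ∧ w i < z ∧ z < w (i+1) := by
  obtain ⟨i, hi, hwi, hwi'⟩ := find_Ico hN h h0 h1
  exact ⟨i, hi, lt_of_le_of_ne hwi (fun hh => hne i (by omega) hh.symm), hwi'⟩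

/-! ### Telescoping -/

lemma telescope (s t : ℕ → ℝ) : ∀ N : ℕ, 1 ≤ N →
    (∑ i ∈ Finset.range N, s i * (t (i+1) - t i))
      + (∑ i ∈ Finset.range (N-1), t (i+1) * (s (i+1) - s i))
    = t N * s (N-1) - t 0 * s 0 := by
  intro N
  induction N with
  | zero => omega
  | succ k ih =>
      intro _
      rcases Nat.eq_zero_or_pos k with rfl | hk
      · simp; ring
      · obtain ⟨l, rfl⟩ : ∃ l, k = l + 1 := ⟨k - 1, by omega⟩
        have h1 : l + 1 + 1 - 1 = l + 1 := by omega
        rw [h1, Finset.sum_range_succ, Finset.sum_range_succ (fun i => t (i+1) * (s (i+1) - s i))]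
        have := ih (by omega)
        have h3 : l + 1 - 1 = l := by omega
        rw [h3] at this
        nlinarith [this]

lemma sum_eq_of_vanish {M : Type*} [AddCommGroup M] (Λ T : Finset ℝ) (w : ℝ → M)
    (h1 : ∀ x ∈ T, x ∉ Λ → w x = 0) (h2 : ∀ x ∈ Λ, x ∉ T → w x = 0) :
    ∑ x ∈ Λ, w x = ∑ x ∈ T, w x := by
  have e1 : ∑ x ∈ Λ ∪ T, w x = ∑ x ∈ Λ, w x := by
    refine (Finset.sum_subset Finset.subset_union_left ?_).symm
    intro x hx hnx
    exact h1 x ((Finset.mem_union.1 hx).resolve_left hnx) hnx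
  have e2 : ∑ x ∈ Λ ∪ T, w x = ∑ x ∈ T, w x := by
    refine (Finset.sum_subset Finset.subset_union_right ?_).symm
    intro x hx hnx
    exact h2 x ((Finset.mem_union.1 hx).resolve_right hnx) hnx
  rw [← e1, e2]

end S6

namespace S6

/-! ### Slopes from affine pieces -/

lemma right_slope_of_affine {f : ℝ → ℝ} {t1 t2 s c x : ℝ}
    (haff : ∀ y ∈ Set.Icc t1 t2, f y = s * y + c) (hx1 : t1 ≤ x) (hx2 : x < t2) :
    HasRightSlope f x s := by
  refine ⟨t2 - x, by linarith, fun y hy => ?_⟩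
  obtain ⟨hy1, hy2⟩ := hy
  have hyI : y ∈ Set.Icc t1 t2 := ⟨by linarith, by linarith⟩
  have hxI : x ∈ Set.Icc t1 t2 := ⟨hx1, le_of_lt hx2⟩
  rw [haff y hyI, haff x hxI]; ring

lemma left_slope_of_affine {f : ℝ → ℝ} {t1 t2 s c x : ℝ}
    (haff : ∀ y ∈ Set.Icc t1 t2, f y = s * y + c) (hx1 : t1 < x) (hx2 : x ≤ t2) :
    HasLeftSlope f x s := by
  refine ⟨x - t1, by linarith, fun y hy => ?_⟩
  obtain ⟨hy1, hy2⟩ := hy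
  have hyI : y ∈ Set.Icc t1 t2 := ⟨by linarith, by linarith⟩
  have hxI : x ∈ Set.Icc t1 t2 := ⟨le_of_lt hx1, hx2⟩
  rw [haff y hyI, haff x hxI]; ring

lemma left_slope_period {f : ℝ → ℝ} {P t1 t2 s c x0 : ℝ}
    (hper : ∀ y : ℝ, 0 < y → f (P * y) = f y) (hP : 1 < P)
    (haff : ∀ y ∈ Set.Icc t1 t2, f y = s * y + c)
    (ht : t1 < t2) (hx0 : 0 < x0) (hx : P * x0 = t2) :
    HasLeftSlope f x0 (P * s) := by
  have hPpos : 0 < P := by linarith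
  refine ⟨min x0 ((t2 - t1) / P), lt_min hx0 (div_pos (by linarith) hPpos), fun y hy => ?_⟩
  obtain ⟨hy1, hy2⟩ := hy
  have hml : min x0 ((t2 - t1) / P) ≤ (t2 - t1) / P := min_le_right _ _
  have hml2 : min x0 ((t2 - t1) / P) ≤ x0 := min_le_left _ _
  have hypos : 0 < y := by linarith
  have hdiv : P * ((t2 - t1) / P) = t2 - t1 := by field_simp
  have h2 : x0 - (t2 - t1) / P < y := by linarith
  have h3 : P * (x0 - (t2 - t1) / P) < P * y := mul_lt_mul_of_pos_left h2 hPpos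
  have hyb : P * y ∈ Set.Icc t1 t2 := by
    constructor
    · nlinarith
    · nlinarith
  have hxb : f x0 = s * t2 + c := by
    rw [← hper x0 hx0, hx]
    exact haff t2 ⟨le_of_lt ht, le_refl _⟩
  rw [← hper y hypos, haff (P * y) hyb, hxb, ← hx]; ring

end S6

namespace S6

lemma forward {p : ℕ} (hp : p.Prime) {χ : ℝ → ZMod (p - 1)}
    (hχ : ∀ (a : ℤ) (m : ℕ), χ ((a : ℝ) / (p : ℝ) ^ m) = (a : ZMod (p - 1)))
    {n : ℕ} (hn : 1 ≤ n) {lam a : ℕ → ℝ} (hlam0 : 0 < lam 0)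
    (hmono : ∀ j, j + 1 < n → lam j < lam (j + 1)) (hlast : lam (n - 1) < p * lam 0)
    (ha : ∀ j, j < n → a j ∈ HpSet p) {f : ℝ → ℝ} (hf : KCp p f)
    (hordj : ∀ j, j < n → HasOrdAt f (lam j) (a j * lam j))
    (hord0 : ∀ x ∈ Set.Ico (lam 0) ((p : ℝ) * lam 0),
      (∀ j, j < n → x ≠ lam j) → HasOrdAt f x 0) :
    (∑ j ∈ Finset.range n, a j * lam j) = 0 ∧
      (∑ j ∈ Finset.range n, χ (a j)) = 0 := by
  classical
  obtain ⟨hcont, hpa, hper⟩ := hf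
  set P : ℝ := (p : ℝ) with hPdef
  have hP1 : 1 < P := hp_one_lt hp
  have hv : lam 0 < P * lam 0 := by nlinarith
  obtain ⟨N, t, hN, ht0, htN, htm, hpieces⟩ := hpa (lam 0) (P * lam 0) hlam0 hv
  -- extract slopes and constants as total functions
  choose sfun hsmem cfun hsc using hpieces
  set s : ℕ → ℝ := fun i => if h : i < N then sfun i h else 0 with hsdef
  set c : ℕ → ℝ := fun i => if h : i < N then cfun i h else 0 with hcdef
  have hpiece : ∀ i, i < N → ∀ x ∈ Set.Icc (t i) (t (i + 1)), f x = s i * x + c i := by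
    intro i hi x hx
    simp only [hsdef, hcdef, dif_pos hi]
    exact hsc i hi x hx
  have hsmem' : ∀ i, i < N → s i ∈ HpSet p := by
    intro i hi
    simp only [hsdef, dif_pos hi]
    exact hsmem i hi
  -- monotonicity facts for t
  have htmono := fun i j hij hjN => seq_strict_mono htm i j hij hjN
  have htmono' := fun i j hij hjN => seq_mono htm i j hij hjN
  -- lam monotonicity
  have hlm : ∀ i, i < n - 1 → lam i < lam (i + 1) := fun i hi => hmono i (by omega)
  have hlmono := fun i j hij hjn => seq_strict_mono (N := n - 1) hlm i j hij hjn
  have hlmono' := fun i j hij hjn => seq_mono (N := n - 1) hlm i j hij hjn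
  -- positivity of the t i
  have htpos : ∀ i, i ≤ N → 0 < t i := by
    intro i hiN
    have := htmono' 0 i (by omega) hiN
    rw [ht0] at this
    linarith
  -- lam j lies in [t 0, t N)
  have hlam_mem : ∀ j, j < n → t 0 ≤ lam j ∧ lam j < t N := by
    intro j hj
    constructor
    · rw [ht0]
      exact hlmono' 0 j (by omega) (by omega)
    · rw [htN]
      calc lam j ≤ lam (n - 1) := hlmono' j (n-1) (by omega) (by omega)
        _ < P * lam 0 := hlast
  -- slopes at the breakpoints
  have hslopeR : ∀ i, i < N → HasRightSlope f (t i) (s i) := by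
    intro i hi
    exact right_slope_of_affine (hpiece i hi) (le_refl _) (htm i hi)
  have hslopeL : ∀ i, i < N → HasLeftSlope f (t (i + 1)) (s i) := by
    intro i hi
    exact left_slope_of_affine (hpiece i hi) (htm i hi) (le_refl _)
  have hNm1 : N - 1 < N := by omega
  have hL0 : HasLeftSlope f (t 0) (P * s (N - 1)) := by
    have h1 : N - 1 + 1 = N := by omega
    refine left_slope_period (s := s (N-1)) (c := c (N-1)) (t1 := t (N-1)) (t2 := t N) hper hP1 ?_ ?_ (htpos 0 (by omega)) ?_
    · intro y hy
      rw [← h1] at hy ⊢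
      exact hpiece (N-1) hNm1 y hy
    · rw [← h1]; exact htm (N-1) hNm1
    · rw [ht0, htN.symm]
  -- telescoping : sum of s i * Δt = 0
  have hfsum : ∀ m, m ≤ N → f (t m) - f (t 0) = ∑ i ∈ Finset.range m, s i * (t (i+1) - t i) := by
    intro m
    induction m with
    | zero => simp
    | succ k ih =>
        intro hk
        rw [Finset.sum_range_succ, ← ih (by omega)]
        have h1 := hpiece k (by omega) (t k) ⟨le_refl _, le_of_lt (htm k (by omega))⟩
        have h2 := hpiece k (by omega) (t (k+1)) ⟨le_of_lt (htm k (by omega)), le_refl _⟩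
        rw [h1, h2]; ring
  have hsum0 : ∑ i ∈ Finset.range N, s i * (t (i+1) - t i) = 0 := by
    rw [← hfsum N (le_refl _)]
    rw [ht0, htN]
    rw [hper (lam 0) hlam0]
    ring
  -- jump values at breakpoints
  have hjmp0 : jmp f (t 0) = s 0 - P * s (N - 1) := jmp_eq (hslopeR 0 hN) hL0
  have hjmpi : ∀ i, i < N - 1 → jmp f (t (i + 1)) = s (i + 1) - s i :=
    fun i hi => jmp_eq (hslopeR (i+1) (by omega)) (hslopeL i (by omega))
  -- the two finite sets
  set Λ : Finset ℝ := (Finset.range n).image lam with hΛdef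
  set T : Finset ℝ := (Finset.range N).image t with hTdef
  have hlinj : ∀ x ∈ Finset.range n, ∀ y ∈ Finset.range n, lam x = lam y → x = y := by
    intro i hi j hj hij
    simp only [Finset.mem_range] at hi hj
    rcases lt_trichotomy i j with h | h | h
    · exact absurd hij (hlmono i j h (by omega)).ne
    · exact h
    · exact absurd hij.symm (hlmono j i h (by omega)).ne
  have htinj : ∀ x ∈ Finset.range N, ∀ y ∈ Finset.range N, t x = t y → x = y := by
    intro i hi j hj hij
    simp only [Finset.mem_range] at hi hj
    rcases lt_trichotomy i j with h | h | h
    · exact absurd hij (htmono i j h (by omega)).ne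
    · exact h
    · exact absurd hij.symm (htmono j i h (by omega)).ne
  -- jump vanishing lemmas
  have hvan1 : ∀ x ∈ T, x ∉ Λ → jmp f x = 0 := by
    intro x hxT hxΛ
    obtain ⟨i, hi, rfl⟩ := Finset.mem_image.1 hxT
    simp only [Finset.mem_range] at hi
    have hne : ∀ j, j < n → t i ≠ lam j := by
      intro j hj he
      exact hxΛ (Finset.mem_image.2 ⟨j, Finset.mem_range.2 hj, he.symm⟩)
    have hx1 : lam 0 ≤ t i := by rw [← ht0]; exact htmono' 0 i (by omega) (by omega)
    have hx2 : t i < P * lam 0 := by rw [← htN]; exact htmono i N hi (le_refl _)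
    exact jmp_zero_of_ord_zero (by linarith) (hord0 (t i) ⟨hx1, hx2⟩ hne)
  have hvan2 : ∀ x ∈ Λ, x ∉ T → jmp f x = 0 := by
    intro x hxΛ hxT
    obtain ⟨j, hj, rfl⟩ := Finset.mem_image.1 hxΛ
    simp only [Finset.mem_range] at hj
    obtain ⟨hx1, hx2⟩ := hlam_mem j hj
    have hne : ∀ i, i ≤ N → lam j ≠ t i := by
      intro i hiN he
      rcases Nat.lt_or_ge i N with hiN' | hiN'
      · exact hxT (Finset.mem_image.2 ⟨i, Finset.mem_range.2 hiN', he.symm⟩)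
      · have hieq : i = N := by omega
        rw [hieq] at he
        rw [he] at hx2
        exact lt_irrefl _ hx2
    obtain ⟨i, hi, hi1, hi2⟩ := find_Ioo hN htm hx1 hx2 hne
    have hR : HasRightSlope f (lam j) (s i) :=
      right_slope_of_affine (hpiece i hi) (le_of_lt hi1) hi2
    have hL : HasLeftSlope f (lam j) (s i) :=
      left_slope_of_affine (hpiece i hi) hi1 (le_of_lt hi2)
    rw [jmp_eq hR hL]; ring
  -- jmp at lam j equals a j
  have hlampos : ∀ j, j < n → 0 < lam j := by
    intro j hj
    have := (hlam_mem j hj).1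
    rw [ht0] at this
    linarith
  have hjl : ∀ j, j < n → jmp f (lam j) = a j := by
    intro j hj
    have h1 := ord_jmp (hordj j hj)
    have h2 : lam j ≠ 0 := ne_of_gt (hlampos j hj)
    have h3 : lam j * (a j) = lam j * jmp f (lam j) := by linarith [h1]
    exact (mul_left_cancel₀ h2 h3).symm
  have htel := telescope s t N hN
  rw [hsum0, zero_add] at htel
  constructor
  · have e1 : ∑ j ∈ Finset.range n, a j * lam j = ∑ x ∈ Λ, x * jmp f x := by
      rw [hΛdef, Finset.sum_image hlinj]
      refine Finset.sum_congr rfl fun j hj => ?_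
      rw [hjl j (Finset.mem_range.1 hj)]; ring
    have e2 : ∑ x ∈ Λ, x * jmp f x = ∑ x ∈ T, x * jmp f x := by
      refine sum_eq_of_vanish Λ T _ (fun x hx hnx => ?_) (fun x hx hnx => ?_)
      · rw [hvan1 x hx hnx]; ring
      · rw [hvan2 x hx hnx]; ring
    have e3 : ∑ x ∈ T, x * jmp f x = ∑ i ∈ Finset.range N, t i * jmp f (t i) := by
      rw [hTdef, Finset.sum_image htinj]
    have e4 : ∑ i ∈ Finset.range N, t i * jmp f (t i)
        = t 0 * jmp f (t 0) + ∑ i ∈ Finset.range (N - 1), t (i+1) * jmp f (t (i+1)) := by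
      have hNr : N = (N - 1) + 1 := by omega
      rw [hNr, Finset.sum_range_succ' (fun i => t i * jmp f (t i)) (N - 1), add_comm, ← hNr]
    have e5 : ∑ i ∈ Finset.range (N - 1), t (i+1) * jmp f (t (i+1))
        = ∑ i ∈ Finset.range (N - 1), t (i+1) * (s (i+1) - s i) := by
      refine Finset.sum_congr rfl fun i hi => ?_
      rw [hjmpi i (Finset.mem_range.1 hi)]
    rw [e1, e2, e3, e4, e5, hjmp0, htel, ht0, htN]
    ring
  · have e1 : ∑ j ∈ Finset.range n, χ (a j) = ∑ x ∈ Λ, χ (jmp f x) := by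
      rw [hΛdef, Finset.sum_image hlinj]
      refine Finset.sum_congr rfl fun j hj => ?_
      rw [hjl j (Finset.mem_range.1 hj)]
    have e2 : ∑ x ∈ Λ, χ (jmp f x) = ∑ x ∈ T, χ (jmp f x) := by
      refine sum_eq_of_vanish Λ T _ (fun x hx hnx => ?_) (fun x hx hnx => ?_)
      · rw [hvan1 x hx hnx]; exact chi_zero hp hχ
      · rw [hvan2 x hx hnx]; exact chi_zero hp hχ
    have e3 : ∑ x ∈ T, χ (jmp f x) = ∑ i ∈ Finset.range N, χ (jmp f (t i)) := by
      rw [hTdef, Finset.sum_image htinj]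
    have e4 : ∑ i ∈ Finset.range N, χ (jmp f (t i))
        = χ (jmp f (t 0)) + ∑ i ∈ Finset.range (N - 1), χ (jmp f (t (i+1))) := by
      have hNr : N = (N - 1) + 1 := by omega
      rw [hNr, Finset.sum_range_succ' (fun i => χ (jmp f (t i))) (N - 1), add_comm, ← hNr]
    have e5 : ∑ i ∈ Finset.range (N - 1), χ (jmp f (t (i+1)))
        = ∑ i ∈ Finset.range (N - 1), (χ (s (i+1)) - χ (s i)) := by
      refine Finset.sum_congr rfl fun i hi => ?_
      have hi' := Finset.mem_range.1 hi
      rw [hjmpi i hi']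
      exact chi_sub hp hχ (hsmem' (i+1) (by omega)) (hsmem' i (by omega))
    have e6 : χ (jmp f (t 0)) = χ (s 0) - χ (s (N - 1)) := by
      rw [hjmp0, chi_sub hp hχ (hsmem' 0 hN) (hPdef ▸ Hp_mulp hp (hsmem' (N-1) hNm1)),
        hPdef, chi_mulp hp hχ (hsmem' (N-1) hNm1)]
    rw [e1, e2, e3, e4, e5, e6, Finset.sum_range_sub (fun i => χ (s i)) (N - 1)]
    ring

end S6

namespace S6

lemma Hp_div_zpow {p : ℕ} (hp : p.Prime) {x : ℝ} (hx : x ∈ HpSet p) (m : ℤ) :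
    x / (p:ℝ) ^ m ∈ HpSet p := by
  obtain ⟨a, k, rfl⟩ := hx
  have h0 : (p:ℝ) ≠ 0 := ne_of_gt (hp_pos hp)
  rcases m with l | l
  · refine ⟨a, k + l, ?_⟩
    rw [Int.ofNat_eq_coe, zpow_natCast, pow_add, div_div]
  · refine ⟨a * p ^ (l + 1), k, ?_⟩
    rw [zpow_negSucc]
    rw [div_eq_mul_inv, inv_inv]
    push_cast
    ring

lemma cont_of_slopes {f : ℝ → ℝ} {x sp sm : ℝ} (hR : HasRightSlope f x sp)
    (hL : HasLeftSlope f x sm) : ContinuousAt f x := by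
  obtain ⟨δp, hδp, hR⟩ := hR
  obtain ⟨δm, hδm, hL⟩ := hL
  rw [Metric.continuousAt_iff]
  intro ε hε
  set C : ℝ := |sp| + |sm| + 1 with hC
  have hC0 : 0 < C := by positivity
  refine ⟨min (min δp δm) (ε / C), by positivity, fun {y} hy => ?_⟩
  rw [Real.dist_eq] at hy ⊢
  have hy1 : |y - x| < δp := lt_of_lt_of_le hy (le_trans (min_le_left _ _) (min_le_left _ _))
  have hy2 : |y - x| < δm := lt_of_lt_of_le hy (le_trans (min_le_left _ _) (min_le_right _ _))
  have hy3 : |y - x| < ε / C := lt_of_lt_of_le hy (min_le_right _ _)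
  have key : |f y - f x| ≤ C * |y - x| := by
    rcases le_or_gt x y with h | h
    · have : f y = f x + sp * (y - x) := by
        refine hR y ⟨h, ?_⟩
        have := abs_lt.1 hy1
        linarith [this.2]
      rw [this]
      have : |f x + sp * (y - x) - f x| = |sp| * |y - x| := by
        rw [add_sub_cancel_left, abs_mul]
      rw [this]
      have h1 : |sp| ≤ C := by rw [hC]; linarith [abs_nonneg sm]
      exact mul_le_mul_of_nonneg_right h1 (abs_nonneg _)
    · have : f y = f x + sm * (y - x) := by
        refine hL y ⟨?_, le_of_lt h⟩
        have := abs_lt.1 hy2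
        linarith [this.1]
      rw [this]
      have : |f x + sm * (y - x) - f x| = |sm| * |y - x| := by
        rw [add_sub_cancel_left, abs_mul]
      rw [this]
      have h1 : |sm| ≤ C := by rw [hC]; linarith [abs_nonneg sp]
      exact mul_le_mul_of_nonneg_right h1 (abs_nonneg _)
  calc |f y - f x| ≤ C * |y - x| := key
    _ < C * (ε / C) := by
        apply mul_lt_mul_of_pos_left hy3 hC0
    _ = ε := by field_simp

end S6

namespace S6

lemma pa_of_breakpoints {Sset : Set ℝ} {f : ℝ → ℝ}
    (h : ∀ u v : ℝ, 0 < u → u < v → ∃ E : Finset ℝ,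
      ∀ x y : ℝ, u ≤ x → x < y → y ≤ v → (∀ z ∈ E, ¬(x < z ∧ z < y)) →
        ∃ s ∈ Sset, ∃ c : ℝ, ∀ w ∈ Set.Icc x y, f w = s * w + c) :
    PiecewiseAffineWith Sset f := by
  intro u v hu huv
  classical
  obtain ⟨E, hE⟩ := h u v hu huv
  set E' : Finset ℝ := insert u (insert v (E.filter (fun z => u < z ∧ z < v))) with hE'def
  set L : List ℝ := E'.sort (· ≤ ·) with hLdef
  have hsorted : L.SortedLT := E'.sortedLT_sort
  have hmemL : ∀ z : ℝ, z ∈ L ↔ z ∈ E' := fun z => Finset.mem_sort _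
  have huE : u ∈ E' := Finset.mem_insert_self _ _
  have hvE : v ∈ E' := Finset.mem_insert_of_mem (Finset.mem_insert_self _ _)
  have hbound : ∀ z ∈ E', u ≤ z ∧ z ≤ v := by
    intro z hz
    rw [hE'def] at hz
    rcases Finset.mem_insert.1 hz with rfl | hz
    · exact ⟨le_refl _, le_of_lt huv⟩
    rcases Finset.mem_insert.1 hz with rfl | hz
    · exact ⟨le_of_lt huv, le_refl _⟩
    · obtain ⟨-, h1, h2⟩ := Finset.mem_filter.1 hz
      exact ⟨le_of_lt h1, le_of_lt h2⟩
  have hlen2 : 2 ≤ L.length := by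
    rw [hLdef, Finset.length_sort]
    have hsub : ({u, v} : Finset ℝ) ⊆ E' := by
      intro z hz
      rcases Finset.mem_insert.1 hz with rfl | hz
      · exact huE
      · rw [Finset.mem_singleton.1 hz]; exact hvE
    have hcard := Finset.card_le_card hsub
    rwa [Finset.card_insert_of_notMem (by simp [ne_of_lt huv]), Finset.card_singleton] at hcard
  set N : ℕ := L.length - 1 with hNdef
  set t : ℕ → ℝ := fun i => L.getD i v with htdef
  have hget : ∀ i (hi : i < L.length), t i = L.get ⟨i, hi⟩ := by
    intro i hi
    rw [htdef]
    simp only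
    rw [List.getD_eq_getElem L v hi]
    exact (List.get_eq_getElem (l := L) (i := ⟨i, hi⟩)).symm
  have hmono : ∀ i, i < N → t i < t (i+1) := by
    intro i hi
    rw [hget i (by omega), hget (i+1) (by omega)]
    exact hsorted.strictMono_get (show (⟨i, by omega⟩ : Fin L.length) < ⟨i+1, by omega⟩ from by
      rw [Fin.mk_lt_mk]; omega)
  have htmem : ∀ i, i < N + 1 → t i ∈ E' := by
    intro i hi
    rw [hget i (by omega)]
    exact (hmemL _).1 (List.get_mem _ _)
  have hidx : ∀ z, z ∈ E' → ∃ j : Fin L.length, L.get j = z := by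
    intro z hz
    exact List.mem_iff_get.1 ((hmemL z).2 hz)
  have ht0 : t 0 = u := by
    have h1 : u ≤ t 0 := (hbound _ (htmem 0 (by omega))).1
    obtain ⟨j, hj⟩ := hidx u huE
    have h2 : t 0 ≤ u := by
      rw [hget 0 (by omega)]
      refine le_of_le_of_eq ?_ hj
      exact hsorted.strictMono_get.monotone (Fin.le_def.2 (Nat.zero_le _))
    linarith
  have htN : t N = v := by
    have h1 : t N ≤ v := (hbound _ (htmem N (by omega))).2
    obtain ⟨j, hj⟩ := hidx v hvE
    have h2 : v ≤ t N := by
      rw [hget N (by omega)]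
      refine hj.symm.trans_le ?_
      refine hsorted.strictMono_get.monotone ?_
      have := j.2
      rw [Fin.le_def]
      simp only
      omega
    linarith
  refine ⟨N, t, by omega, ht0, htN, hmono, ?_⟩
  intro i hi
  have hx1 : u ≤ t i := (hbound _ (htmem i (by omega))).1
  have hy2 : t (i+1) ≤ v := (hbound _ (htmem (i+1) (by omega))).2
  refine hE (t i) (t (i+1)) hx1 (hmono i hi) hy2 ?_
  rintro z hz ⟨hz1, hz2⟩
  have hzE' : z ∈ E' := by
    rw [hE'def]
    refine Finset.mem_insert_of_mem (Finset.mem_insert_of_mem (Finset.mem_filter.2 ⟨hz, ?_, ?_⟩))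
    · exact lt_of_le_of_lt hx1 hz1
    · exact lt_of_lt_of_le hz2 hy2
  obtain ⟨j, hj⟩ := hidx z hzE'
  rcases Nat.lt_or_ge (j : ℕ) (i+1) with hji | hji
  · have : L.get j ≤ t i := by
      rw [hget i (by omega)]
      exact hsorted.strictMono_get.monotone (by rw [Fin.le_def]; simp only; omega)
    rw [hj] at this
    linarith
  · have : t (i+1) ≤ L.get j := by
      rw [hget (i+1) (by omega)]
      exact hsorted.strictMono_get.monotone (by rw [Fin.le_def]; simp only; omega)
    rw [hj] at this
    linarith

end S6

namespace S6

section Scale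

variable {f : ℝ → ℝ} {P : ℝ} (hP1 : 1 < P) (hper : ∀ y : ℝ, 0 < y → f (P * y) = f y)
include hP1 hper

lemma scale_up_R {x s : ℝ} (hx : 0 < x) (h : HasRightSlope f x s) :
    HasRightSlope f (P * x) (s / P) := by
  have hP0 : 0 < P := by linarith
  obtain ⟨δ, hδ, h⟩ := h
  refine ⟨P * δ, by positivity, fun y hy => ?_⟩
  obtain ⟨hy1, hy2⟩ := hy
  have hz : y / P ∈ Set.Ico x (x + δ) := by
    constructor
    · rw [le_div_iff₀ hP0]; linarith
    · rw [div_lt_iff₀ hP0]; linarith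
  have hz0 : 0 < y / P := lt_of_lt_of_le hx hz.1
  have h1 : f (P * (y / P)) = f (y / P) := hper _ hz0
  have h2 : P * (y / P) = y := by field_simp
  rw [h2] at h1
  rw [h1, h _ hz, hper x hx]
  field_simp

lemma scale_up_L {x s : ℝ} (hx : 0 < x) (h : HasLeftSlope f x s) :
    HasLeftSlope f (P * x) (s / P) := by
  have hP0 : 0 < P := by linarith
  obtain ⟨δ, hδ, h⟩ := h
  refine ⟨P * min δ (x / 2), by have := half_pos hx; positivity, fun y hy => ?_⟩
  obtain ⟨hy1, hy2⟩ := hy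
  have hm1 : min δ (x / 2) ≤ δ := min_le_left _ _
  have hm2 : min δ (x / 2) ≤ x / 2 := min_le_right _ _
  have hz : y / P ∈ Set.Ioc (x - δ) x := by
    constructor
    · rw [lt_div_iff₀ hP0]; nlinarith
    · rw [div_le_iff₀ hP0]; linarith
  have hz0 : 0 < y / P := by
    have : x - δ ⊓ (x / 2) ≥ x / 2 - δ ⊓ (x/2) := by linarith
    have h3 : 0 < y := by nlinarith
    positivity
  have h1 : f (P * (y / P)) = f (y / P) := hper _ hz0
  have h2 : P * (y / P) = y := by field_simp
  rw [h2] at h1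
  rw [h1, h _ hz, hper x hx]
  field_simp

lemma scale_down_R {x s : ℝ} (hx : 0 < x) (h : HasRightSlope f (P * x) s) :
    HasRightSlope f x (s * P) := by
  have hP0 : 0 < P := by linarith
  obtain ⟨δ, hδ, h⟩ := h
  refine ⟨δ / P, by positivity, fun y hy => ?_⟩
  obtain ⟨hy1, hy2⟩ := hy
  have hz : P * y ∈ Set.Ico (P * x) (P * x + δ) := by
    constructor
    · nlinarith
    · have := (lt_div_iff₀ hP0).1 (by linarith : y - x < δ / P)
      nlinarith
  have hy0 : 0 < y := lt_of_lt_of_le hx hy1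
  rw [← hper y hy0, h _ hz, hper x hx]
  ring

lemma scale_down_L {x s : ℝ} (hx : 0 < x) (h : HasLeftSlope f (P * x) s) :
    HasLeftSlope f x (s * P) := by
  have hP0 : 0 < P := by linarith
  obtain ⟨δ, hδ, h⟩ := h
  refine ⟨min (δ / P) (x / 2), lt_min (by positivity) (half_pos hx), fun y hy => ?_⟩
  obtain ⟨hy1, hy2⟩ := hy
  have hm1 : min (δ / P) (x / 2) ≤ δ / P := min_le_left _ _
  have hm2 : min (δ / P) (x / 2) ≤ x / 2 := min_le_right _ _
  have hy0 : 0 < y := by nlinarith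
  have hz : P * y ∈ Set.Ioc (P * x - δ) (P * x) := by
    constructor
    · have := (lt_div_iff₀ hP0).1 (by linarith : x - y < δ / P)
      nlinarith
    · nlinarith
  rw [← hper y hy0, h _ hz, hper x hx]
  ring

lemma slopes_global {lam0 : ℝ} {Sset : Set ℝ} (hl0 : 0 < lam0)
    (hSmul : ∀ s ∈ Sset, s * P ∈ Sset) (hSdiv : ∀ s ∈ Sset, s / P ∈ Sset)
    (hbase : ∀ x, lam0 ≤ x → x < P * lam0 →
      ∃ sp ∈ Sset, ∃ sm ∈ Sset, HasRightSlope f x sp ∧ HasLeftSlope f x sm) :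
    ∀ x, 0 < x →
      ∃ sp ∈ Sset, ∃ sm ∈ Sset, HasRightSlope f x sp ∧ HasLeftSlope f x sm := by
  have hP0 : 0 < P := by linarith
  set Q : ℝ → Prop := fun x =>
    ∃ sp ∈ Sset, ∃ sm ∈ Sset, HasRightSlope f x sp ∧ HasLeftSlope f x sm with hQdef
  have Qup : ∀ x, 0 < x → Q x → Q (P * x) := by
    rintro x hx ⟨sp, hsp, sm, hsm, hR, hL⟩
    exact ⟨sp / P, hSdiv _ hsp, sm / P, hSdiv _ hsm,
      scale_up_R hP1 hper hx hR, scale_up_L hP1 hper hx hL⟩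
  have Qdown : ∀ x, 0 < x → Q (P * x) → Q x := by
    rintro x hx ⟨sp, hsp, sm, hsm, hR, hL⟩
    exact ⟨sp * P, hSmul _ hsp, sm * P, hSmul _ hsm,
      scale_down_R hP1 hper hx hR, scale_down_L hP1 hper hx hL⟩
  have hup : ∀ k : ℕ, ∀ x, 0 < x → Q x → Q (P ^ k * x) := by
    intro k
    induction k with
    | zero => intro x hx hQ; simpa using hQ
    | succ m ih =>
        intro x hx hQ
        have he : P ^ (m+1) * x = P * (P ^ m * x) := by ring
        rw [he]
        exact Qup _ (by positivity) (ih x hx hQ)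
  have hdown : ∀ k : ℕ, ∀ x, 0 < x → Q (P ^ k * x) → Q x := by
    intro k
    induction k with
    | zero => intro x hx hQ; simpa using hQ
    | succ m ih =>
        intro x hx hQ
        have he : P ^ (m+1) * x = P ^ m * (P * x) := by ring
        rw [he] at hQ
        exact Qdown x hx (ih (P * x) (by positivity) hQ)
  have step1 : ∀ y, lam0 ≤ y → Q y := by
    intro y hy
    have hy0 : 0 < y := lt_of_lt_of_le hl0 hy
    have hex : ∃ k : ℕ, y < P ^ (k+1) * lam0 := by
      obtain ⟨k, hk⟩ := pow_unbounded_of_one_lt (y / lam0) hP1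
      refine ⟨k, ?_⟩
      have h1 := (div_lt_iff₀ hl0).1 hk
      have h2 : P ^ k * lam0 ≤ P ^ (k+1) * lam0 :=
        mul_le_mul_of_nonneg_right (pow_le_pow_right₀ (le_of_lt hP1) (Nat.le_succ k)) (le_of_lt hl0)
      nlinarith
    set k := Nat.find hex with hkdef
    have hk2 : y < P ^ (k+1) * lam0 := Nat.find_spec hex
    have hk1 : P ^ k * lam0 ≤ y := by
      rcases Nat.eq_zero_or_pos k with hk0 | hk0
      · rw [hk0]; simpa using hy
      · have := Nat.find_min hex (m := k - 1) (by omega)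
        push_neg at this
        have hke : k - 1 + 1 = k := by omega
        rwa [hke] at this
    set z := y / P ^ k with hzdef
    have hz1 : lam0 ≤ z := by
      rw [hzdef, le_div_iff₀ (by positivity)]
      nlinarith
    have hz2 : z < P * lam0 := by
      rw [hzdef, div_lt_iff₀ (by positivity)]
      have : P ^ (k+1) * lam0 = P * lam0 * P ^ k := by ring
      nlinarith
    have hzy : P ^ k * z = y := by
      rw [hzdef]; field_simp
    have := hup k z (by linarith) (hbase z hz1 hz2)
    rwa [hzy] at this
  intro x hx
  obtain ⟨k, hk⟩ := pow_unbounded_of_one_lt (lam0 / x) hP1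
  have hk' : lam0 ≤ P ^ k * x := by
    have := (div_lt_iff₀ hx).1 hk
    nlinarith
  exact hdown k x hx (step1 _ hk')

end Scale

end S6

namespace S6

set_option maxHeartbeats 1600000 in
lemma construct {p : ℕ} (hp : p.Prime) {χ : ℝ → ZMod (p - 1)}
    (hχ : ∀ (a : ℤ) (m : ℕ), χ ((a : ℝ) / (p : ℝ) ^ m) = (a : ZMod (p - 1)))
    {n : ℕ} (hn : 1 ≤ n) {lam a : ℕ → ℝ} (hlam0 : 0 < lam 0)
    (hmono : ∀ j, j + 1 < n → lam j < lam (j + 1)) (hlast : lam (n - 1) < p * lam 0)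
    (ha : ∀ j, j < n → a j ∈ HpSet p)
    (hdeg : (∑ j ∈ Finset.range n, a j * lam j) = 0)
    (hchi : (∑ j ∈ Finset.range n, χ (a j)) = 0) :
    ∃ f : ℝ → ℝ, KCp p f ∧
      (∀ j, j < n → HasOrdAt f (lam j) (a j * lam j)) ∧
      (∀ x ∈ Set.Ico (lam 0) ((p : ℝ) * lam 0),
        (∀ j, j < n → x ≠ lam j) → HasOrdAt f x 0) := by
  classical
  set P : ℝ := (p : ℝ) with hPdef
  have hP1 : 1 < P := hp_one_lt hp
  have hP0 : 0 < P := by linarith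
  have hPne : P ≠ 0 := ne_of_gt hP0
  -- lam monotonicity
  have hlm : ∀ i, i < n - 1 → lam i < lam (i+1) := fun i hi => hmono i (by omega)
  have hlmono := fun i j hij hjn => seq_strict_mono (N := n-1) hlm i j hij hjn
  have hlmono' := fun i j hij hjn => seq_mono (N := n-1) hlm i j hij hjn
  -- the scaled partition endpoints
  set mu : ℕ → ℝ := fun j => if j < n then lam j else P * lam 0 with hmudef
  have hmu0 : mu 0 = lam 0 := if_pos (by omega)
  have hmun : mu n = P * lam 0 := if_neg (by omega)
  have hmuj : ∀ j, j < n → mu j = lam j := fun j hj => if_pos hj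
  have hmum : ∀ i, i < n → mu i < mu (i+1) := by
    intro i hi
    rcases Nat.lt_or_ge (i+1) n with h | h
    · rw [hmuj i hi, hmuj (i+1) h]; exact hmono i h
    · have hin : i + 1 = n := by omega
      rw [hmuj i hi, hin, hmun]
      have := hlmono' i (n-1) (by omega) (le_refl _)
      linarith
  have hmumono' := fun i j hij hjn => seq_mono (N := n) hmum i j hij hjn
  -- sigma
  have hA : (∑ j ∈ Finset.range n, a j) ∈ HpSet p := Hp_sum hp ha
  obtain ⟨B, M, hBM⟩ := hA
  have hchiA : ((B : ℤ) : ZMod (p-1)) = 0 := by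
    have h1 : χ (∑ j ∈ Finset.range n, a j) = 0 := by
      rw [chi_sum hp hχ ha]; exact hchi
    rw [hBM, hχ] at h1; exact h1
  have hdvd : ((p - 1 : ℕ) : ℤ) ∣ B := (ZMod.intCast_zmod_eq_zero_iff_dvd B (p-1)).1 hchiA
  obtain ⟨C, hC⟩ := hdvd
  set σ : ℝ := ((-(C * p) : ℤ) : ℝ) / (p:ℝ) ^ M with hσdef
  have hσmem : σ ∈ HpSet p := ⟨-(C * p), M, rfl⟩
  have hσ : σ * (P - 1) = -(P * (∑ j ∈ Finset.range n, a j)) := by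
    rw [hBM, hC, hσdef]
    have hp1 : (1:ℕ) ≤ p := hp.pos
    have hpow : ((p:ℝ))^M ≠ 0 := pow_ne_zero _ (ne_of_gt (hp_pos hp))
    rw [hPdef]
    push_cast [Nat.cast_sub hp1]
    field_simp
  -- slopes and constants
  set S : ℕ → ℝ := fun i => σ + ∑ j ∈ Finset.range (i+1), a j with hSdef
  set Cc : ℕ → ℝ := fun i => -(σ * lam 0) - ∑ j ∈ Finset.range (i+1), a j * lam j with hCcdef
  have hSmem : ∀ i, i < n → S i ∈ HpSet p := fun i hi =>
    Hp_add hp hσmem (Hp_sum hp (fun j hj => ha j (by omega)))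
  have hSn1 : S (n-1) = σ + ∑ j ∈ Finset.range n, a j := by
    rw [hSdef]
    simp only
    have h1 : n - 1 + 1 = n := by omega
    rw [h1]
  have hS0 : S 0 = σ + a 0 := by
    rw [hSdef]
    simp
  have hwrap : S 0 - P * S (n-1) = a 0 := by
    rw [hSn1, hS0]
    linear_combination -hσ
  have hstep : ∀ j, 1 ≤ j → j < n → S j - S (j-1) = a j := by
    intro j h1 h2
    rw [hSdef]
    simp only
    have h3 : j - 1 + 1 = j := by omega
    rw [h3, Finset.sum_range_succ]
    ring
  -- the base function g
  set g : ℝ → ℝ := fun x => σ * (x - lam 0) + ∑ j ∈ Finset.range n, a j * max 0 (x - lam j)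
    with hgdef
  have hgaff : ∀ i, i < n → ∀ x ∈ Set.Icc (mu i) (mu (i+1)), g x = S i * x + Cc i := by
    intro i hi x hx
    obtain ⟨hx1, hx2⟩ := hx
    rw [hgdef]
    simp only
    rw [← Finset.sum_range_add_sum_Ico (fun j => a j * max 0 (x - lam j))
      (show i+1 ≤ n by omega)]
    have e1 : ∑ j ∈ Finset.range (i+1), a j * max 0 (x - lam j)
        = ∑ j ∈ Finset.range (i+1), a j * (x - lam j) := by
      refine Finset.sum_congr rfl fun j hj => ?_
      have hj' := Finset.mem_range.1 hj
      have hle : lam j ≤ lam i := hlmono' j i (by omega) (by omega)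
      have : lam i = mu i := (hmuj i hi).symm
      rw [max_eq_right (by linarith)]
    have e2 : ∑ j ∈ Finset.Ico (i+1) n, a j * max 0 (x - lam j) = 0 := by
      refine Finset.sum_eq_zero fun j hj => ?_
      obtain ⟨hj1, hj2⟩ := Finset.mem_Ico.1 hj
      have hle : mu (i+1) ≤ mu j := hmumono' (i+1) j hj1 (by omega)
      have : mu j = lam j := hmuj j hj2
      rw [max_eq_left (by linarith), mul_zero]
    rw [e1, e2, add_zero]
    have e3 : ∑ j ∈ Finset.range (i+1), a j * (x - lam j)
        = (∑ j ∈ Finset.range (i+1), a j) * x - ∑ j ∈ Finset.range (i+1), a j * lam j := by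
      rw [Finset.sum_mul, ← Finset.sum_sub_distrib]
      exact Finset.sum_congr rfl fun j _ => by ring
    rw [e3, hSdef, hCcdef]
    ring
  have hg0 : g (lam 0) = 0 := by
    rw [hgdef]
    simp only
    have e1 : ∑ j ∈ Finset.range n, a j * max 0 (lam 0 - lam j) = 0 := by
      refine Finset.sum_eq_zero fun j hj => ?_
      have hj' := Finset.mem_range.1 hj
      have hle : lam 0 ≤ lam j := hlmono' 0 j (by omega) (by omega)
      rw [max_eq_left (by linarith), mul_zero]
    rw [e1]
    ring
  have hgend : g (P * lam 0) = 0 := by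
    rw [hgdef]
    simp only
    have e1 : ∑ j ∈ Finset.range n, a j * max 0 (P * lam 0 - lam j)
        = ∑ j ∈ Finset.range n, (a j * (P * lam 0) - a j * lam j) := by
      refine Finset.sum_congr rfl fun j hj => ?_
      have hj' := Finset.mem_range.1 hj
      have hle : lam j ≤ lam (n-1) := hlmono' j (n-1) (by omega) (le_refl _)
      rw [max_eq_right (by linarith)]
      ring
    rw [e1, Finset.sum_sub_distrib, ← Finset.sum_mul, hdeg]
    linear_combination lam 0 * hσ
  -- the global function f
  set kk : ℝ → ℤ := fun x => ⌊Real.logb P (x / lam 0)⌋ with hkkdef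
  set f : ℝ → ℝ := fun x => g (x / P ^ (kk x)) with hfdef
  have hkband : ∀ (m : ℤ) (y : ℝ), P ^ m * lam 0 ≤ y → y < P ^ (m+1) * lam 0 → kk y = m := by
    intro m y h1 h2
    have hPm : (0:ℝ) < P ^ m := zpow_pos hP0 m
    have hy0 : 0 < y := lt_of_lt_of_le (by positivity) h1
    have hyl : 0 < y / lam 0 := by positivity
    rw [hkkdef]
    simp only
    rw [Int.floor_eq_iff]
    constructor
    · rw [Real.le_logb_iff_rpow_le hP1 hyl, Real.rpow_intCast, le_div_iff₀ hlam0]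
      linarith
    · rw [show ((m:ℝ) + 1) = ((m + 1 : ℤ) : ℝ) by push_cast; ring,
        Real.logb_lt_iff_lt_rpow hP1 hyl, Real.rpow_intCast, div_lt_iff₀ hlam0]
      linarith
  have hband : ∀ (m : ℤ) (y : ℝ), P ^ m * lam 0 ≤ y → y < P ^ (m+1) * lam 0 →
      f y = g (y / P ^ m) := by
    intro m y h1 h2
    rw [hfdef]
    simp only
    rw [hkband m y h1 h2]
  have hbandex : ∀ y : ℝ, 0 < y → P ^ (kk y) * lam 0 ≤ y ∧ y < P ^ (kk y + 1) * lam 0 := by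
    intro y hy
    have hyl : 0 < y / lam 0 := by positivity
    constructor
    · have h1 : ((kk y : ℤ) : ℝ) ≤ Real.logb P (y / lam 0) := Int.floor_le _
      have h2 := (Real.le_logb_iff_rpow_le hP1 hyl).1 h1
      rw [Real.rpow_intCast] at h2
      have h3 := (le_div_iff₀ hlam0).1 h2
      linarith
    · have h1 : Real.logb P (y / lam 0) < ((kk y : ℤ) : ℝ) + 1 := Int.lt_floor_add_one _
      rw [show ((kk y : ℤ) : ℝ) + 1 = ((kk y + 1 : ℤ) : ℝ) by push_cast; ring] at h1
      have h2 := (Real.logb_lt_iff_lt_rpow hP1 hyl).1 h1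
      rw [Real.rpow_intCast] at h2
      have h3 := (div_lt_iff₀ hlam0).1 h2
      linarith
  have hper : ∀ y : ℝ, 0 < y → f (P * y) = f y := by
    intro y hy
    obtain ⟨h1, h2⟩ := hbandex y hy
    have h3 : P ^ (kk y + 1) * lam 0 ≤ P * y := by
      rw [zpow_add_one₀ hPne]
      nlinarith
    have h4 : P * y < P ^ (kk y + 1 + 1) * lam 0 := by
      rw [zpow_add_one₀ hPne (kk y + 1)]
      nlinarith [zpow_pos hP0 (kk y + 1), zpow_add_one₀ hPne (kk y)]
    rw [hband (kk y + 1) (P*y) h3 h4, hband (kk y) y h1 h2]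
    congr 1
    rw [zpow_add_one₀ hPne]
    have hPk : P ^ (kk y) ≠ 0 := ne_of_gt (zpow_pos hP0 _)
    field_simp
  have hbase : ∀ y, lam 0 ≤ y → y < P * lam 0 → f y = g y := by
    intro y h1 h2
    have := hband 0 y (by simpa using h1) (by rw [zero_add, zpow_one]; exact h2)
    simpa using this
  have hband' : ∀ (m : ℤ) (y : ℝ), P ^ m * lam 0 ≤ y → y ≤ P ^ (m+1) * lam 0 →
      f y = g (y / P ^ m) := by
    intro m y h1 h2
    rcases lt_or_eq_of_le h2 with h2 | h2
    · exact hband m y h1 h2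
    · have h3 : P ^ (m+1) * lam 0 ≤ y := le_of_eq h2.symm
      have h4 : y < P ^ (m+1+1) * lam 0 := by
        rw [zpow_add_one₀ hPne (m+1)]
        have h5 : P ^ (m+1) * lam 0 * 1 < P ^ (m+1) * lam 0 * P :=
          mul_lt_mul_of_pos_left hP1 (mul_pos (zpow_pos hP0 (m+1)) hlam0)
        nlinarith
      rw [hband (m+1) y h3 h4]
      have e1 : y / P ^ (m+1) = lam 0 := by
        rw [h2, zpow_add_one₀ hPne]
        have : P ^ m ≠ 0 := ne_of_gt (zpow_pos hP0 _)
        field_simp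
      have e2 : y / P ^ m = P * lam 0 := by
        rw [h2, zpow_add_one₀ hPne]
        have : P ^ m ≠ 0 := ne_of_gt (zpow_pos hP0 _)
        field_simp
      rw [e1, e2, hg0, hgend]
  -- base-band slope lemmas
  have hmuPl : ∀ i, i ≤ n → mu i ≤ P * lam 0 := by
    intro i hi
    have := hmumono' i n hi (le_refl _)
    rw [hmun] at this
    exact this
  have hmu0le : ∀ i, i ≤ n → lam 0 ≤ mu i := by
    intro i hi
    have := hmumono' 0 i (by omega) hi
    rw [hmu0] at this
    exact this
  have hfR : ∀ i, i < n → ∀ x, mu i ≤ x → x < mu (i+1) → HasRightSlope f x (S i) := by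
    intro i hi x h1 h2
    refine ⟨mu (i+1) - x, by linarith, fun y hy => ?_⟩
    obtain ⟨hy1, hy2⟩ := hy
    have hyI : y ∈ Set.Icc (mu i) (mu (i+1)) := ⟨by linarith, by linarith⟩
    have hxI : x ∈ Set.Icc (mu i) (mu (i+1)) := ⟨h1, by linarith⟩
    have hylt : y < P * lam 0 := by
      have := hmuPl (i+1) (by omega)
      linarith
    have hxlt : x < P * lam 0 := by
      have := hmuPl (i+1) (by omega)
      linarith
    have hyge : lam 0 ≤ y := le_trans (hmu0le i (by omega)) hyI.1
    have hxge : lam 0 ≤ x := le_trans (hmu0le i (by omega)) h1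
    rw [hbase y hyge hylt, hbase x hxge hxlt, hgaff i hi y hyI, hgaff i hi x hxI]
    ring
  have hfL : ∀ i, i < n → ∀ x, mu i < x → x ≤ mu (i+1) → x < P * lam 0 →
      HasLeftSlope f x (S i) := by
    intro i hi x h1 h2 h3
    refine ⟨x - mu i, by linarith, fun y hy => ?_⟩
    obtain ⟨hy1, hy2⟩ := hy
    have hyI : y ∈ Set.Icc (mu i) (mu (i+1)) := ⟨by linarith, by linarith⟩
    have hxI : x ∈ Set.Icc (mu i) (mu (i+1)) := ⟨le_of_lt h1, h2⟩
    have hyge : lam 0 ≤ y := le_trans (hmu0le i (by omega)) hyI.1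
    have hxge : lam 0 ≤ x := le_trans (hmu0le i (by omega)) (le_of_lt h1)
    rw [hbase y hyge (by linarith), hbase x hxge h3, hgaff i hi y hyI, hgaff i hi x hxI]
    ring
  have hn1 : n - 1 + 1 = n := by omega
  have hCend : S (n-1) * (P * lam 0) + Cc (n-1) = 0 := by
    have hI : P * lam 0 ∈ Set.Icc (mu (n-1)) (mu ((n-1)+1)) := by
      rw [hn1, hmun]
      exact ⟨hmuPl (n-1) (by omega), le_refl _⟩
    have := hgaff (n-1) (by omega) (P * lam 0) hI
    rw [← this, hgend]
  have hfL0 : HasLeftSlope f (lam 0) (P * S (n-1)) := by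
    have hgap : (0:ℝ) < (P * lam 0 - lam (n-1)) / P := by
      have : lam (n-1) < P * lam 0 := hlast
      exact div_pos (by linarith) hP0
    have hself : lam 0 / P < lam 0 := by
      rw [div_lt_iff₀ hP0]; nlinarith
    refine ⟨min (lam 0 - lam 0 / P) ((P * lam 0 - lam (n-1)) / P),
      lt_min (by linarith) hgap, fun y hy => ?_⟩
    obtain ⟨hy1, hy2⟩ := hy
    rcases eq_or_lt_of_le hy2 with rfl | hylt
    · simp
    · have hm1 : min (lam 0 - lam 0 / P) ((P * lam 0 - lam (n-1)) / P) ≤ lam 0 - lam 0 / P :=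
        min_le_left _ _
      have hm2 : min (lam 0 - lam 0 / P) ((P * lam 0 - lam (n-1)) / P)
          ≤ (P * lam 0 - lam (n-1)) / P := min_le_right _ _
      have hyP : lam 0 / P < y := by linarith
      have hy0 : 0 < y := by
        have : 0 < lam 0 / P := by positivity
        linarith
      have hb1 : P ^ (-1:ℤ) * lam 0 ≤ y := by
        rw [zpow_neg_one]
        have : P⁻¹ * lam 0 = lam 0 / P := by field_simp
        rw [this]
        linarith
      have hb2 : y < P ^ ((-1:ℤ)+1) * lam 0 := by
        norm_num
        exact hylt
      have hfy : f y = g (y / P ^ (-1:ℤ)) := hband (-1) y hb1 hb2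
      have hyP' : y / P ^ (-1:ℤ) = P * y := by
        rw [zpow_neg_one, div_eq_mul_inv, inv_inv]
        ring
      have hPyI : P * y ∈ Set.Icc (mu (n-1)) (mu ((n-1)+1)) := by
        rw [hn1, hmun, hmuj (n-1) (by omega)]
        constructor
        · have h5 : P * ((P * lam 0 - lam (n-1)) / P) = P * lam 0 - lam (n-1) := by
            field_simp
          nlinarith
        · nlinarith
      have hgy := hgaff (n-1) (by omega) (P * y) hPyI
      have hfl0 : f (lam 0) = 0 := by
        rw [hbase (lam 0) (le_refl _) (by nlinarith), hg0]
      rw [hfy, hyP', hgy, hfl0]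
      linear_combination hCend
  -- global slope existence
  have hbase_slopes : ∀ x, lam 0 ≤ x → x < P * lam 0 →
      ∃ sp ∈ HpSet p, ∃ sm ∈ HpSet p, HasRightSlope f x sp ∧ HasLeftSlope f x sm := by
    intro x h1 h2
    have hmu0x : mu 0 ≤ x := by rwa [hmu0]
    have hxmun : x < mu n := by rwa [hmun]
    obtain ⟨i, hi, hi1, hi2⟩ := find_Ico (show 0 < n by omega) hmum hmu0x hxmun
    have hR : HasRightSlope f x (S i) := hfR i hi x hi1 hi2
    rcases eq_or_lt_of_le hi1 with heq | hlt
    · rcases Nat.eq_zero_or_pos i with rfl | hipos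
      · have hxeq : x = lam 0 := by rw [← hmu0, heq]
        exact ⟨S 0, hSmem 0 (by omega), P * S (n-1),
          Hp_mulp hp (hSmem (n-1) (by omega)), hR, by rw [hxeq]; exact hfL0⟩
      · have hL : HasLeftSlope f x (S (i-1)) := by
          have h3 : i - 1 + 1 = i := by omega
          have hg1 : mu (i-1) < x := by
            rw [← heq]
            have := hmum (i-1) (by omega)
            rwa [h3] at this
          have hg2 : x ≤ mu (i-1+1) := by rw [h3, ← heq]
          exact hfL (i-1) (by omega) x hg1 hg2 h2
        exact ⟨S i, hSmem i hi, S (i-1), hSmem (i-1) (by omega), hR, hL⟩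
    · exact ⟨S i, hSmem i hi, S i, hSmem i hi, hR,
        hfL i hi x hlt (le_of_lt hi2) h2⟩
  have hglobal := slopes_global hP1 hper hlam0
    (fun s hs => by rw [mul_comm]; exact Hp_mulp hp hs)
    (fun s hs => Hp_divp hp hs) hbase_slopes
  have hcont : ContinuousOn f (Set.Ioi 0) := by
    intro x hx
    obtain ⟨sp, -, sm, -, hR, hL⟩ := hglobal x hx
    exact (cont_of_slopes hR hL).continuousWithinAt
  -- piecewise affinity
  have hkkmono : ∀ x y : ℝ, 0 < x → x ≤ y → kk x ≤ kk y := by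
    intro x y hx hxy
    rw [hkkdef]
    simp only
    exact Int.floor_le_floor (Real.logb_le_logb_of_le hP1 (by positivity)
      ((div_le_div_iff_of_pos_right hlam0).2 hxy))
  have hpa : PiecewiseAffineWith (HpSet p) f := by
    apply pa_of_breakpoints
    intro u v hu huv
    refine ⟨((Finset.Icc (kk u) (kk v)) ×ˢ (Finset.range (n+1))).image
      (fun q => P ^ q.1 * mu q.2), ?_⟩
    intro x y hux hxy hyv hnoz
    have hmemE : ∀ (m : ℤ), kk u ≤ m → m ≤ kk v → ∀ j, j ≤ n →
        P ^ m * mu j ∈ ((Finset.Icc (kk u) (kk v)) ×ˢ (Finset.range (n+1))).image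
          (fun q => P ^ q.1 * mu q.2) := by
      intro m hm1 hm2 j hj
      exact Finset.mem_image.2 ⟨(m, j), Finset.mem_product.2
        ⟨Finset.mem_Icc.2 ⟨hm1, hm2⟩, Finset.mem_range.2 (by omega)⟩, rfl⟩
    set z := (x + y)/2 with hzdef
    have hxz : x < z := by rw [hzdef]; linarith
    have hzy : z < y := by rw [hzdef]; linarith
    have hz0 : 0 < z := by linarith
    set m := kk z with hmdef
    have hmu' : kk u ≤ m := hkkmono u z hu (by linarith)
    have hmv : m ≤ kk v := hkkmono z v hz0 (by linarith)
    obtain ⟨hb1, hb2⟩ := hbandex z hz0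
    have hPm0 : (0:ℝ) < P ^ m := zpow_pos hP0 m
    have hxlow : P ^ m * lam 0 ≤ x := by
      by_contra hcon
      push_neg at hcon
      have hmem := hmemE m hmu' hmv 0 (by omega)
      rw [hmu0] at hmem
      exact hnoz _ hmem ⟨hcon, lt_of_le_of_lt hb1 hzy⟩
    have hyhigh : y ≤ P ^ (m+1) * lam 0 := by
      by_contra hcon
      push_neg at hcon
      have he : P ^ (m+1) * lam 0 = P ^ m * mu n := by
        rw [hmun, zpow_add_one₀ hPne]; ring
      refine hnoz _ (he ▸ hmemE m hmu' hmv n (le_refl _)) ?_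
      exact ⟨lt_trans hxz hb2, hcon⟩
    have hz1 : mu 0 ≤ z / P ^ m := by
      rw [hmu0, le_div_iff₀ hPm0]
      nlinarith
    have hz2 : z / P ^ m < mu n := by
      rw [hmun, div_lt_iff₀ hPm0]
      nlinarith [zpow_add_one₀ hPne m]
    obtain ⟨i, hi, hi1, hi2⟩ := find_Ico (show 0 < n by omega) hmum hz1 hz2
    have hi1' : P ^ m * mu i ≤ z := by
      have := (le_div_iff₀ hPm0).1 hi1
      nlinarith
    have hi2' : z < P ^ m * mu (i+1) := by
      have := (div_lt_iff₀ hPm0).1 hi2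
      nlinarith
    have hxlow2 : P ^ m * mu i ≤ x := by
      by_contra hcon
      push_neg at hcon
      exact hnoz _ (hmemE m hmu' hmv i (by omega)) ⟨hcon, lt_of_le_of_lt hi1' hzy⟩
    have hyhigh2 : y ≤ P ^ m * mu (i+1) := by
      by_contra hcon
      push_neg at hcon
      exact hnoz _ (hmemE m hmu' hmv (i+1) (by omega)) ⟨lt_trans hxz hi2', hcon⟩
    refine ⟨S i / P ^ m, Hp_div_zpow hp (hSmem i hi) m, Cc i, fun w hw => ?_⟩
    obtain ⟨hw1, hw2⟩ := hw
    have hmu0i : mu 0 ≤ mu i := hmumono' 0 i (by omega) (by omega)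
    have hmuin : mu (i+1) ≤ mu n := hmumono' (i+1) n (by omega) (le_refl _)
    have hwb1 : P ^ m * lam 0 ≤ w := by
      rw [← hmu0]
      have : P ^ m * mu 0 ≤ P ^ m * mu i := by nlinarith
      linarith
    have hwb2 : w ≤ P ^ (m+1) * lam 0 := by
      have he : P ^ (m+1) * lam 0 = P ^ m * mu n := by
        rw [hmun, zpow_add_one₀ hPne]; ring
      rw [he]
      have : P ^ m * mu (i+1) ≤ P ^ m * mu n := by nlinarith
      linarith
    have hfw : f w = g (w / P ^ m) := hband' m w hwb1 hwb2
    have hwI : w / P ^ m ∈ Set.Icc (mu i) (mu (i+1)) := by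
      constructor
      · rw [le_div_iff₀ hPm0]; linarith [hxlow2, hw1]
      · rw [div_le_iff₀ hPm0]; linarith [hyhigh2, hw2]
    rw [hfw, hgaff i hi _ hwI]
    field_simp
  -- orders at the lam j
  have hords : ∀ j, j < n → HasOrdAt f (lam j) (a j * lam j) := by
    intro j hj
    rcases Nat.eq_zero_or_pos j with rfl | hjpos
    · refine ⟨S 0, P * S (n-1), ?_, hfL0, ?_⟩
      · exact hfR 0 (by omega) (lam 0) (le_of_eq hmu0)
          (by rw [← hmu0]; exact hmum 0 (by omega))
      · rw [← hwrap]; ring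
    · have hj1 : j - 1 + 1 = j := by omega
      refine ⟨S j, S (j-1), ?_, ?_, ?_⟩
      · exact hfR j hj (lam j) (le_of_eq (hmuj j hj))
          (by rw [← hmuj j hj]; exact hmum j hj)
      · apply hfL (j-1) (by omega) (lam j) ?_ ?_ ?_
        · rw [hmuj (j-1) (by omega)]
          exact hlmono (j-1) j (by omega) (by omega)
        · rw [hj1, hmuj j hj]
        · have := hlmono' j (n-1) (by omega) (le_refl _)
          linarith
      · rw [← hstep j (by omega) hj]; ring
  -- order zero elsewhere
  have hord0 : ∀ x ∈ Set.Ico (lam 0) ((p:ℝ) * lam 0),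
      (∀ j, j < n → x ≠ lam j) → HasOrdAt f x 0 := by
    intro x hx hne
    obtain ⟨hx1, hx2⟩ := hx
    rw [← hPdef] at hx2
    have hnemu : ∀ i, i ≤ n → x ≠ mu i := by
      intro i hi
      rcases Nat.lt_or_ge i n with h | h
      · rw [hmuj i h]; exact hne i h
      · have : i = n := by omega
        rw [this, hmun]; exact ne_of_lt hx2
    have hmu0x : mu 0 ≤ x := by rwa [hmu0]
    have hxmun : x < mu n := by rwa [hmun]
    obtain ⟨i, hi, hi1, hi2⟩ := find_Ioo (show 0 < n by omega) hmum hmu0x hxmun hnemu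
    exact ⟨S i, S i, hfR i hi x (le_of_lt hi1) hi2,
      hfL i hi x hi1 (le_of_lt hi2) hx2, by ring⟩
  exact ⟨f, ⟨hcont, hpa, fun y hy => hper y hy⟩, hords, hord0⟩

end S6

/-- Given points `λ_0 < … < λ_{n−1} < pλ_0` in `(0,∞)` and `a_j ∈ H_p`, there is
an `f ∈ K(C_p)` with order `a_j λ_j` at each `λ_j` and order `0` elsewhere on `[λ_0, pλ_0)` iff
`Σ a_j λ_j = 0` and `Σ χ(a_j) = 0` in `ℤ/(p−1)ℤ`; moreover every pair
`(d, m) ∈ ℝ × ℤ/(p−1)ℤ` is realized by such data. (Equivalently, `(deg, χ)` induces an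
isomorphism `Div(C_p)/P ≅ ℝ × ℤ/(p−1)ℤ`.) -/
theorem statement6 (p : ℕ) (hp : p.Prime)
    (χ : ℝ → ZMod (p - 1))
    (hχ : ∀ (a : ℤ) (m : ℕ), χ ((a : ℝ) / (p : ℝ) ^ m) = (a : ZMod (p - 1))) :
    (∀ n : ℕ, 1 ≤ n → ∀ lam a : ℕ → ℝ, 0 < lam 0 →
      (∀ j, j + 1 < n → lam j < lam (j + 1)) → lam (n - 1) < p * lam 0 →
      (∀ j, j < n → a j ∈ HpSet p) →
      ((∃ f : ℝ → ℝ, KCp p f ∧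
          (∀ j, j < n → HasOrdAt f (lam j) (a j * lam j)) ∧
          (∀ x ∈ Set.Ico (lam 0) ((p : ℝ) * lam 0),
            (∀ j, j < n → x ≠ lam j) → HasOrdAt f x 0)) ↔
        ((∑ j ∈ Finset.range n, a j * lam j) = 0 ∧
          (∑ j ∈ Finset.range n, χ (a j)) = 0))) ∧
    (∀ (d : ℝ) (m : ZMod (p - 1)),
      ∃ n : ℕ, 1 ≤ n ∧ ∃ lam a : ℕ → ℝ, 0 < lam 0 ∧
        (∀ j, j + 1 < n → lam j < lam (j + 1)) ∧ lam (n - 1) < p * lam 0 ∧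
        (∀ j, j < n → a j ∈ HpSet p) ∧
        (∑ j ∈ Finset.range n, a j * lam j) = d ∧
        (∑ j ∈ Finset.range n, χ (a j)) = m) := by
  constructor
  · intro n hn lam a hlam0 hmono hlast ha
    constructor
    · rintro ⟨f, hf, h1, h2⟩
      exact S6.forward hp hχ hn hlam0 hmono hlast ha hf h1 h2
    · rintro ⟨hdeg, hchi⟩
      exact S6.construct hp hχ hn hlam0 hmono hlast ha hdeg hchi
  · intro d m
    haveI : NeZero (p - 1) := ⟨by have := hp.two_le; omega⟩
    set r0 : ℤ := (m.val : ℤ) with hr0def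
    have hr0 : ((r0 : ℤ) : ZMod (p-1)) = m := by
      rw [hr0def]
      push_cast
      rw [ZMod.natCast_val, ZMod.cast_id]
    set r : ℤ := if d = (r0:ℝ) then r0 - (p-1 : ℕ) else r0 with hrdef
    have hrm : ((r:ℤ) : ZMod (p-1)) = m := by
      rw [hrdef]
      split_ifs
      · push_cast
        rw [ZMod.natCast_self]
        rw [hr0def]
        push_cast
        rw [ZMod.natCast_val, ZMod.cast_id]
        ring
      · exact hr0
    have hp1R : (1:ℝ) ≤ ((p - 1 : ℕ) : ℝ) := by
      have : 1 ≤ p - 1 := by have := hp.two_le; omega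
      exact_mod_cast this
    set c : ℝ := d - (r : ℝ) with hcdef
    have hc0 : c ≠ 0 := by
      rw [hcdef, hrdef]
      split_ifs with h
      · push_cast
        rw [h]
        intro hh
        linarith
      · intro hh
        exact h (by linarith)
    set B : ℤ := if 0 < c then ⌈c⌉ + 1 else -(⌈-c⌉ + 1) with hBdef
    have hkey : 0 < c / (B:ℝ) ∧ c / (B:ℝ) < 1 ∧ (B:ℝ) ≠ 0 := by
      rw [hBdef]
      split_ifs with h
      · have hBgt : c < ((⌈c⌉ + 1 : ℤ) : ℝ) := by push_cast; linarith [Int.le_ceil c]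
        have hBpos : (0:ℝ) < ((⌈c⌉ + 1 : ℤ) : ℝ) := lt_trans h hBgt
        exact ⟨div_pos h hBpos, (div_lt_one hBpos).2 hBgt, ne_of_gt hBpos⟩
      · have hcneg : c < 0 := lt_of_le_of_ne (le_of_not_gt h) hc0
        have h1 : -c ≤ (⌈-c⌉ : ℝ) := Int.le_ceil (-c)
        have hBlt : ((-(⌈-c⌉ + 1) : ℤ) : ℝ) < c := by push_cast; linarith
        have hBneg : ((-(⌈-c⌉ + 1) : ℤ) : ℝ) < 0 := by linarith
        constructor
        · rw [← neg_div_neg_eq]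
          exact div_pos (by linarith) (by linarith)
        constructor
        · rw [← neg_div_neg_eq]
          exact (div_lt_one (by linarith)).2 (by linarith)
        · exact ne_of_lt hBneg
    obtain ⟨hq1, hq2, hBne⟩ := hkey
    refine ⟨2, by omega, (fun j => if j = 0 then 1 else 1 + c / (B:ℝ)),
      (fun j => if j = 0 then ((r - B : ℤ) : ℝ) else ((B:ℤ):ℝ)), by norm_num, ?_, ?_, ?_, ?_, ?_⟩
    · intro j hj
      have hj0 : j = 0 := by omega
      subst hj0
      show (1:ℝ) < 1 + c / (B:ℝ)
      linarith
    · have hp2 : (2:ℝ) ≤ p := by exact_mod_cast hp.two_le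
      show (1:ℝ) + c / (B:ℝ) < (p:ℝ) * 1
      linarith
    · intro j hj
      rcases (by omega : j = 0 ∨ j = 1) with rfl | rfl
      · simp only [if_pos rfl]
        exact S6.Hp_int _
      · simp only [if_neg one_ne_zero]
        exact S6.Hp_int _
    · rw [Finset.sum_range_succ, Finset.sum_range_one]
      show ((r - B : ℤ) : ℝ) * 1 + ((B:ℤ):ℝ) * (1 + c / (B:ℝ)) = d
      have e : ((B:ℤ):ℝ) * (1 + c / (B:ℝ)) = B + c := by
        field_simp
      rw [e, hcdef]
      push_cast
      ring
    · rw [Finset.sum_range_succ, Finset.sum_range_one]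
      show χ (((r - B : ℤ) : ℝ)) + χ (((B:ℤ):ℝ)) = m
      have e1 : χ (((r - B : ℤ) : ℝ)) = ((r - B : ℤ) : ZMod (p-1)) := by
        have := hχ (r - B) 0
        simpa using this
      have e2 : χ (((B:ℤ):ℝ)) = ((B:ℤ) : ZMod (p-1)) := by
        have := hχ B 0
        simpa using this
      rw [e1, e2]
      push_cast
      rw [sub_add_cancel]
      exact hrm
end

section
/- Fix a prime p and let θ : (0,∞) → ℝ be the basic theta function. Then for all λ ∈ (0,∞): |θ(λ) − (λ/(p−1) − log λ / log p)| ≤ 1. -/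
/-- `f₊(λ) = Σ_{m≥0} max(0, 1 − p^m λ)`. -/
noncomputable def fPlus (p : ℕ) (lam : ℝ) : ℝ := ∑' m : ℕ, max 0 (1 - (p : ℝ) ^ m * lam)

/-- `f₋(λ) = Σ_{m≥1} max(0, p^{−m} λ − 1)`. -/
noncomputable def fMinus (p : ℕ) (lam : ℝ) : ℝ :=
  ∑' m : ℕ, max 0 (((p : ℝ) ^ (m + 1))⁻¹ * lam - 1)

/-- The basic theta function `θ = f₊ + f₋`. -/
noncomputable def theta (p : ℕ) (lam : ℝ) : ℝ := fPlus p lam + fMinus p lam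

lemma log_key (p t : ℝ) (hp : 2 ≤ p) (h1 : 1 ≤ t) (h2 : t ≤ p) :
    (t - 1) / (p - 1) * Real.log p ≤ Real.log t := by
  have hp1 : (1:ℝ) < p := by linarith
  set a : ℝ := (p - t) / (p - 1) with ha_def
  set b : ℝ := (t - 1) / (p - 1) with hb_def
  have ha : 0 ≤ a := div_nonneg (by linarith) (by linarith)
  have hb : 0 ≤ b := div_nonneg (by linarith) (by linarith)
  have hab : a + b = 1 := by
    rw [ha_def, hb_def, ← add_div]
    rw [show p - t + (t - 1) = p - 1 by ring, div_self (by linarith : p - (1:ℝ) ≠ 0)]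
  have h := (strictConcaveOn_log_Ioi.concaveOn).2 (Set.mem_Ioi.mpr one_pos)
      (Set.mem_Ioi.mpr (by linarith : (0:ℝ) < p)) ha hb hab
  have ht : a • (1:ℝ) + b • p = t := by
    rw [smul_eq_mul, smul_eq_mul, ha_def, hb_def, mul_one, div_mul_eq_mul_div,
      ← add_div, show p - t + (t - 1) * p = t * (p - 1) by ring, mul_div_assoc,
      div_self (by linarith : p - (1:ℝ) ≠ 0), mul_one]
  rw [ht] at h
  simpa [smul_eq_mul, Real.log_one] using h

lemma core (p : ℕ) (hp : 2 ≤ p) (t : ℝ) (h1 : 1 ≤ t) (h2 : t ≤ p) :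
    |Real.log t / Real.log (p:ℝ) - t / ((p:ℝ) - 1)| ≤ 1 := by
  have hp2 : (2:ℝ) ≤ (p:ℝ) := by exact_mod_cast hp
  have hp1 : (1:ℝ) < (p:ℝ) := by linarith
  have hlogp : 0 < Real.log p := Real.log_pos hp1
  have hlogt0 : 0 ≤ Real.log t := Real.log_nonneg h1
  have hlogtp : Real.log t ≤ Real.log p := Real.log_le_log (by linarith) h2
  rw [abs_le]
  constructor
  · have key := log_key (p:ℝ) t hp2 h1 h2
    have hA : (t - 1) / ((p:ℝ) - 1) ≤ Real.log t / Real.log p := by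
      rw [div_le_div_iff₀ (by linarith) hlogp]
      calc (t - 1) * Real.log p
          = (t - 1) / ((p:ℝ) - 1) * Real.log p * ((p:ℝ)-1) := by
            rw [div_mul_eq_mul_div, div_mul_cancel₀ _ (by linarith : (p:ℝ) - 1 ≠ 0)]
        _ ≤ Real.log t * ((p:ℝ) - 1) := by
            apply mul_le_mul_of_nonneg_right key (by linarith)
    have hB : t / ((p:ℝ) - 1) - (t - 1) / ((p:ℝ) - 1) = 1 / ((p:ℝ) - 1) := by
      rw [div_sub_div_same]; ring_nf
    have hC : 1 / ((p:ℝ) - 1) ≤ 1 := by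
      rw [div_le_one (by linarith)]; linarith
    linarith
  · have h3 : Real.log t / Real.log p ≤ 1 := by
      rw [div_le_one hlogp]; exact hlogtp
    have h4 : 0 ≤ t / ((p:ℝ) - 1) := div_nonneg (by linarith) (by linarith)
    linarith

open Finset in
lemma fPlus_eq (p : ℕ) (hp : 2 ≤ p) (lam : ℝ) (n : ℕ)
    (h1 : ∀ m < n, (p:ℝ) ^ m * lam < 1) (h2 : 1 ≤ (p:ℝ) ^ n * lam) :
    fPlus p lam = n - lam * ((p:ℝ) ^ n - 1) / ((p:ℝ) - 1) := by
  have hp1 : (1:ℝ) < (p:ℝ) := by exact_mod_cast hp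
  have hlam : 0 ≤ lam := by
    by_contra hc
    push_neg at hc
    have : (p:ℝ) ^ n * lam ≤ 0 := mul_nonpos_of_nonneg_of_nonpos (by positivity) hc.le
    linarith
  rw [fPlus, tsum_eq_sum (s := range n) ?h0]
  · rw [Finset.sum_congr rfl (fun m hm => max_eq_right (by
      have := h1 m (mem_range.mp hm); linarith))]
    rw [Finset.sum_sub_distrib, Finset.sum_const, card_range, nsmul_eq_mul, mul_one,
      ← Finset.sum_mul, geom_sum_eq (ne_of_gt hp1)]
    field_simp
  · intro m hm
    have hmn : n ≤ m := le_of_not_gt (fun h => hm (mem_range.mpr h))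
    have hpow : (p:ℝ)^n ≤ (p:ℝ)^m := pow_le_pow_right₀ (le_of_lt hp1) hmn
    have : 1 ≤ (p:ℝ)^m * lam := le_trans h2 (mul_le_mul_of_nonneg_right hpow hlam)
    exact max_eq_left (by linarith)

open Finset in
lemma fMinus_eq (p : ℕ) (hp : 2 ≤ p) (lam : ℝ) (k : ℕ)
    (h1 : (p:ℝ) ^ k ≤ lam) (h2 : lam < (p:ℝ) ^ (k+1)) :
    fMinus p lam = lam * (1 - ((p:ℝ) ^ k)⁻¹) / ((p:ℝ) - 1) - k := by
  have hp1 : (1:ℝ) < (p:ℝ) := by exact_mod_cast hp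
  have hp0 : (0:ℝ) < (p:ℝ) := by linarith
  rw [fMinus, tsum_eq_sum (s := range k) ?h0]
  · rw [Finset.sum_congr rfl (fun m hm => max_eq_right (by
      have hm' := mem_range.mp hm
      have hpow : (p:ℝ)^(m+1) ≤ (p:ℝ)^k := pow_le_pow_right₀ (le_of_lt hp1) (by omega)
      have hple : (p:ℝ)^(m+1) ≤ lam := le_trans hpow h1
      have hpos : (0:ℝ) < (p:ℝ)^(m+1) := by positivity
      have : 1 ≤ ((p:ℝ)^(m+1))⁻¹ * lam := by
        rw [← div_eq_inv_mul, le_div_iff₀ hpos, one_mul]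
        exact hple
      linarith))]
    have hterm : ∀ m ∈ range k, ((p:ℝ)^(m+1))⁻¹ * lam - 1
        = ((p:ℝ)⁻¹)^m * ((p:ℝ)⁻¹ * lam) - 1 := by
      intro m _
      rw [pow_succ, mul_inv, inv_pow]
      ring
    rw [Finset.sum_congr rfl hterm, Finset.sum_sub_distrib, Finset.sum_const, card_range,
      nsmul_eq_mul, mul_one, ← Finset.sum_mul, geom_sum_eq (by
        intro h
        have : (p:ℝ) = 1 := by
          field_simp at h
          linarith [h]
        linarith)]
    have hpk : ((p:ℝ)^k) ≠ 0 := by positivity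
    have hpne : (p:ℝ) ≠ 0 := ne_of_gt hp0
    have key : ((p:ℝ)⁻¹ ^ k - 1)/((p:ℝ)⁻¹ - 1) * ((p:ℝ)⁻¹ * lam)
        = lam * (1 - ((p:ℝ)^k)⁻¹) / ((p:ℝ) - 1) := by
      rw [inv_pow, div_mul_eq_mul_div,
        div_eq_div_iff (sub_ne_zero.mpr (by
          intro h
          rw [inv_eq_one] at h
          linarith)) (sub_ne_zero.mpr (ne_of_gt hp1))]
      field_simp
      ring
    linarith [key]
  · intro m hm
    have hmn : k ≤ m := le_of_not_gt (fun h => hm (mem_range.mpr h))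
    have hpow : (p:ℝ)^(k+1) ≤ (p:ℝ)^(m+1) := pow_le_pow_right₀ (le_of_lt hp1) (by omega)
    have hpos : (0:ℝ) < (p:ℝ)^(m+1) := by positivity
    have : ((p:ℝ)^(m+1))⁻¹ * lam < 1 := by
      rw [← div_eq_inv_mul, div_lt_one hpos]
      linarith
    exact max_eq_left (by linarith)

/-- `|θ(λ) − (λ/(p−1) − log λ / log p)| ≤ 1` for all `λ > 0`. -/
theorem statement8 (p : ℕ) (hp : p.Prime) :
    ∀ lam : ℝ, 0 < lam →
      |theta p lam - (lam / ((p : ℝ) - 1) - Real.log lam / Real.log p)| ≤ 1 := by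
  intro lam hlam
  have hp2 : 2 ≤ p := hp.two_le
  have hp1 : (1:ℝ) < (p:ℝ) := by exact_mod_cast hp2
  have hp0 : (0:ℝ) < (p:ℝ) := by linarith
  have hpne : (p:ℝ) ≠ 0 := ne_of_gt hp0
  have hlogp : Real.log (p:ℝ) ≠ 0 := ne_of_gt (Real.log_pos hp1)
  have hpm1 : (p:ℝ) - 1 ≠ 0 := by intro h; linarith [sub_eq_zero.mp h]
  rcases le_or_gt 1 lam with hge | hlt
  · -- case λ ≥ 1
    have hfplus : fPlus p lam = 0 := by
      have := fPlus_eq p hp2 lam 0 (fun m hm => absurd hm (Nat.not_lt_zero m)) (by simpa using hge)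
      simpa using this
    obtain ⟨N, hN⟩ := pow_unbounded_of_one_lt lam hp1
    have hex : ∃ n : ℕ, lam < (p:ℝ) ^ n := ⟨N, hN⟩
    set n := Nat.find hex with hn_def
    have hn : lam < (p:ℝ) ^ n := Nat.find_spec hex
    have hn0 : n ≠ 0 := by
      intro h
      rw [h] at hn
      simp at hn
      linarith
    obtain ⟨k, hk⟩ := Nat.exists_eq_succ_of_ne_zero hn0
    have h1 : (p:ℝ) ^ k ≤ lam := by
      have := Nat.find_min hex (m := k) (by omega)
      push_neg at this
      exact this
    have h2 : lam < (p:ℝ) ^ (k+1) := by rw [hk] at hn; exact hn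
    have hfminus := fMinus_eq p hp2 lam k h1 h2
    have hpk : ((p:ℝ)^k) ≠ 0 := by positivity
    have hpkpos : (0:ℝ) < (p:ℝ)^k := by positivity
    have h1t : 1 ≤ lam * ((p:ℝ)^k)⁻¹ := by
      rw [← div_eq_mul_inv, le_div_iff₀ hpkpos, one_mul]
      exact h1
    have h2t : lam * ((p:ℝ)^k)⁻¹ ≤ (p:ℝ) := by
      rw [← div_eq_mul_inv, div_le_iff₀ hpkpos]
      rw [pow_succ] at h2
      linarith [h2]
    have hlog : Real.log (lam * ((p:ℝ)^k)⁻¹) = Real.log lam - k * Real.log p := by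
      rw [Real.log_mul (ne_of_gt hlam) (by positivity), Real.log_inv, Real.log_pow]
      ring
    have hgoal : theta p lam - (lam / ((p:ℝ) - 1) - Real.log lam / Real.log p)
        = Real.log (lam * ((p:ℝ)^k)⁻¹) / Real.log p
          - (lam * ((p:ℝ)^k)⁻¹) / ((p:ℝ) - 1) := by
      rw [theta, hfplus, hfminus, hlog]
      field_simp
      ring
    rw [hgoal]
    exact core p hp2 _ h1t h2t
  · -- case λ < 1
    have hfminus : fMinus p lam = 0 := by
      rw [fMinus, tsum_eq_sum (s := (∅ : Finset ℕ)) ?_, Finset.sum_empty]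
      intro m _
      have hple : ((p:ℝ)^(m+1))⁻¹ ≤ 1 := by
        rw [inv_le_one_iff₀]
        right
        exact one_le_pow₀ (le_of_lt hp1)
      have : ((p:ℝ)^(m+1))⁻¹ * lam ≤ 1 * 1 :=
        mul_le_mul hple (le_of_lt hlt) (le_of_lt hlam) zero_le_one
      exact max_eq_left (by linarith)
    have hex : ∃ n : ℕ, 1 ≤ (p:ℝ) ^ n * lam := by
      obtain ⟨N, hN⟩ := pow_unbounded_of_one_lt lam⁻¹ hp1
      refine ⟨N, ?_⟩
      have := mul_lt_mul_of_pos_right hN hlam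
      rw [inv_mul_cancel₀ (ne_of_gt hlam)] at this
      linarith
    set n := Nat.find hex with hn_def
    have hn : 1 ≤ (p:ℝ) ^ n * lam := Nat.find_spec hex
    have hmin : ∀ m < n, (p:ℝ) ^ m * lam < 1 := by
      intro m hm
      have := Nat.find_min hex hm
      push_neg at this
      exact this
    have hfplus := fPlus_eq p hp2 lam n hmin hn
    have hn0 : n ≠ 0 := by
      intro h
      rw [h] at hn
      simp at hn
      linarith
    obtain ⟨j, hj⟩ := Nat.exists_eq_succ_of_ne_zero hn0
    have h2t : (p:ℝ) ^ n * lam ≤ (p:ℝ) := by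
      have hjlt := hmin j (by omega)
      rw [hj, pow_succ]
      calc (p:ℝ) ^ j * (p:ℝ) * lam = (p:ℝ) * ((p:ℝ)^j * lam) := by ring
        _ ≤ (p:ℝ) * 1 := by nlinarith [hjlt]
        _ = (p:ℝ) := mul_one _
    have hlog : Real.log ((p:ℝ)^n * lam) = n * Real.log p + Real.log lam := by
      rw [Real.log_mul (by positivity) (ne_of_gt hlam), Real.log_pow]
    have hgoal : theta p lam - (lam / ((p:ℝ) - 1) - Real.log lam / Real.log p)
        = Real.log ((p:ℝ)^n * lam) / Real.log p - ((p:ℝ)^n * lam) / ((p:ℝ) - 1) := by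
      rw [theta, hfplus, hfminus, hlog]
      field_simp
      ring
    rw [hgoal]
    exact core p hp2 _ hn h2t
end
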